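/- arXiv:1402.1617 — 3 statements merged into one kernel-verified Lean document; each statement's English description precedes it below -/
import Mathlib

section
/- The capacity of the binary symmetric AGP channel with crossover probability p = 1/2 and delay set 𝒟 = {0,1} equals 1/2 bit per channel use. -/
open scoped BigOperators

namespace BSAGP9

/-- `p` is a probability mass function on the finite alphabet `α`. -/
def IsPMF {α : Type*} [Fintype α] (p : α → ℝ) : Prop :=
  (∀ a, 0 ≤ p a) ∧ ∑ a, p a = 1

/-- The side-information sequence seen by the encoder: the state sequence `s`
delayed by `d`, completed by fresh i.i.d. states `z` outside of the range. -/
def sideInfo {𝒮 : Type*} (n : ℕ) (d : ℤ) (s z : Fin n → 𝒮) : Fin n → 𝒮 :=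
  fun i =>
    if h : 0 ≤ (i : ℤ) - d ∧ (i : ℤ) - d < n then s ⟨((i : ℤ) - d).toNat, by omega⟩
    else z i

/-- A `(M, n)`-code for the asynchronous Gel'fand-Pinsker channel. -/
structure Code (𝒳 𝒮 𝒴 : Type*) (M n : ℕ) where
  enc : Fin M → (Fin n → 𝒮) → Fin n → 𝒳
  dec : (Fin n → 𝒴) → Fin M

/-- Average probability of error of a code for delay `d`. -/
noncomputable def errProb {𝒳 𝒮 𝒴 : Type*} [Fintype 𝒳] [Fintype 𝒮] [Fintype 𝒴]
    (W : 𝒳 → 𝒮 → 𝒴 → ℝ) (PS : 𝒮 → ℝ) {M n : ℕ} (c : Code 𝒳 𝒮 𝒴 M n) (d : ℤ) : ℝ :=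
  (M : ℝ)⁻¹ *
    ∑ m : Fin M, ∑ s : Fin n → 𝒮, ∑ z : Fin n → 𝒮, ∑ y : Fin n → 𝒴,
      (∏ i, PS (s i)) * (∏ i, PS (z i)) *
        (∏ i, W (c.enc m (sideInfo n d s z) i) (s i) (y i)) *
        (if c.dec y ≠ m then (1 : ℝ) else 0)

/-- A rate `R` is achievable for the AGP channel with delay set `{-dmin, …, dmax}` if there
is a sequence of codes with at least `2^{nR}` messages whose error probability vanishes for
every delay in the delay set. -/
def Achievable {𝒳 𝒮 𝒴 : Type*} [Fintype 𝒳] [Fintype 𝒮] [Fintype 𝒴]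
    (W : 𝒳 → 𝒮 → 𝒴 → ℝ) (PS : 𝒮 → ℝ) (dmin dmax : ℕ) (R : ℝ) : Prop :=
  ∃ Msz : ℕ → ℕ, ∃ c : ∀ n, Code 𝒳 𝒮 𝒴 (Msz n) n,
    (∀ n : ℕ, (2 : ℝ) ^ ((n : ℝ) * R) ≤ (Msz n : ℝ)) ∧
    ∀ d : ℤ, -(dmin : ℤ) ≤ d → d ≤ (dmax : ℤ) →
      Filter.Tendsto (fun n => errProb W PS (c n) d) Filter.atTop (nhds 0)

/-- The binary symmetric AGP channel: deterministic output `Y = X ⊕ S`. -/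
noncomputable def bscW : Bool → Bool → Bool → ℝ :=
  fun x s y => if y = xor x s then 1 else 0

/-- Bernoulli(`p`) pmf on `Bool`. -/
noncomputable def bern (p : ℝ) : Bool → ℝ := fun b => if b then p else 1 - p

/-- Binary entropy function (in bits): `h₂(x) = −x log₂ x − (1−x) log₂ (1−x)`. -/
noncomputable def h2 (x : ℝ) : ℝ :=
  -(x * Real.logb 2 x) - (1 - x) * Real.logb 2 (1 - x)

/-- the channel output when message `m`, states `s`, fresh states `z`, delay `d`. -/
def out {M N : ℕ} (c : Code Bool Bool Bool M N) (d : ℤ) (m : Fin M)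
    (s z : Fin N → Bool) : Fin N → Bool :=
  fun i => xor (c.enc m (sideInfo N d s z) i) (s i)

/-- number of error triples -/
noncomputable def badCount {M N : ℕ} (c : Code Bool Bool Bool M N) (d : ℤ) : ℕ :=
  (Finset.univ.filter (fun x : Fin M × (Fin N → Bool) × (Fin N → Bool) =>
      c.dec (out c d x.1 x.2.1 x.2.2) ≠ x.1)).card

lemma errProb_eq {M N : ℕ} (c : Code Bool Bool Bool M N) (d : ℤ) :
    errProb bscW (bern (1/2)) c d
      = (M : ℝ)⁻¹ * ((2:ℝ)^N)⁻¹ * ((2:ℝ)^N)⁻¹ * (badCount c d : ℝ) := by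
  have hb : ∀ b, bern (1/2) b = 1/2 := by intro b; cases b <;> norm_num [bern]
  have hprod : ∀ s : Fin N → Bool, (∏ i, bern (1/2) (s i)) = ((2:ℝ)^N)⁻¹ := by
    intro s
    simp only [hb]
    rw [Finset.prod_const]
    simp [one_div, inv_pow]
  have hW : ∀ (x s y : Fin N → Bool),
      (∏ i, bscW (x i) (s i) (y i)) = if y = (fun i => xor (x i) (s i)) then (1:ℝ) else 0 := by
    intro x s y
    simp only [bscW]
    rw [Finset.prod_boole]
    congr 1
    simp [funext_iff]
  have key : ∀ (m : Fin M) (s z : Fin N → Bool),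
      (∑ y : Fin N → Bool, (∏ i, bern (1/2) (s i)) * (∏ i, bern (1/2) (z i)) *
        (∏ i, bscW (c.enc m (sideInfo N d s z) i) (s i) (y i)) *
        (if c.dec y ≠ m then (1:ℝ) else 0))
      = ((2:ℝ)^N)⁻¹ * ((2:ℝ)^N)⁻¹ * (if c.dec (out c d m s z) ≠ m then (1:ℝ) else 0) := by
    intro m s z
    have : ∀ y : Fin N → Bool,
        (∏ i, bern (1/2) (s i)) * (∏ i, bern (1/2) (z i)) *
          (∏ i, bscW (c.enc m (sideInfo N d s z) i) (s i) (y i)) *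
          (if c.dec y ≠ m then (1:ℝ) else 0)
        = if y = out c d m s z then
            (((2:ℝ)^N)⁻¹ * ((2:ℝ)^N)⁻¹ * (if c.dec y ≠ m then (1:ℝ) else 0)) else 0 := by
      intro y
      rw [hprod s, hprod z, hW]
      unfold out
      by_cases h : y = (fun i => xor (c.enc m (sideInfo N d s z) i) (s i)) <;> simp [h] <;> ring
    rw [Finset.sum_congr rfl (fun y _ => this y), Finset.sum_ite_eq' Finset.univ]
    simp
  unfold errProb badCount
  simp_rw [key]
  rw [← Finset.sum_boole (fun x : Fin M × (Fin N → Bool) × (Fin N → Bool) =>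
      c.dec (out c d x.1 x.2.1 x.2.2) ≠ x.1) Finset.univ]
  rw [Fintype.sum_prod_type]
  simp_rw [Fintype.sum_prod_type]
  simp_rw [Finset.mul_sum]
  ring_nf
lemma sideInfo_zero {𝒮 : Type*} {n : ℕ} (s z : Fin n → 𝒮) : sideInfo n 0 s z = s := by
  funext i
  have hlt := i.isLt
  have h : (0:ℤ) ≤ (i:ℤ) - 0 ∧ (i:ℤ) - 0 < n := by constructor <;> omega
  unfold sideInfo
  rw [dif_pos h]
  congr 1

lemma sideInfo_one {𝒮 : Type*} {n : ℕ} (s z : Fin n → 𝒮) (i : Fin n) :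
    sideInfo n 1 s z i = if h : 1 ≤ (i:ℕ) then s ⟨(i:ℕ)-1, by omega⟩ else z i := by
  have hlt := i.isLt
  unfold sideInfo
  by_cases h : 1 ≤ (i:ℕ)
  · have h1 : 0 ≤ (i:ℤ) - 1 ∧ (i:ℤ) - 1 < n := by constructor <;> omega
    rw [dif_pos h1, dif_pos h]
    congr 1
    ext
    simp only
    omega
  · have h1 : ¬(0 ≤ (i:ℤ) - 1 ∧ (i:ℤ) - 1 < n) := by
      push_neg
      intro hc
      omega
    rw [dif_neg h1, dif_neg h]
/-- shift with fresh last bit -/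
def sh {N : ℕ} (a : Fin N → Bool) (e : Bool) : Fin N → Bool :=
  fun i => if h : (i:ℕ)+1 < N then a ⟨(i:ℕ)+1, h⟩ else e

/-- consecutive xors -/
def dl {N : ℕ} (a : Fin N → Bool) (e : Bool) : Fin N → Bool :=
  fun i => xor (a i) (sh a e i)

lemma xor_right_cancel {x y b : Bool} (h : (xor x b) = xor y b) : x = y := by
  revert h; cases x <;> cases y <;> cases b <;> decide

lemma dl_inj {N : ℕ} {a a' : Fin N → Bool} {e : Bool} (h : dl a e = dl a' e) : a = a' := by
  have key : ∀ d : ℕ, ∀ i : Fin N, N - (i:ℕ) ≤ d → a i = a' i := by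
    intro d
    induction d with
    | zero => intro i hi; exact absurd hi (by have := i.isLt; omega)
    | succ d ih =>
      intro i hi
      have hc := congrFun h i
      unfold dl sh at hc
      by_cases h1 : (i:ℕ)+1 < N
      · rw [dif_pos h1, dif_pos h1] at hc
        have h2 := ih ⟨(i:ℕ)+1, h1⟩ (by simp only []; omega)
        rw [← h2] at hc
        exact xor_right_cancel hc
      · rw [dif_neg h1, dif_neg h1] at hc
        exact xor_right_cancel hc
  funext i
  exact key N i (by omega)

lemma xor_xor_xor (x u v : Bool) : xor (xor x u) (xor x v) = xor u v := by
  cases x <;> cases u <;> cases v <;> rfl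

lemma minpow (N k : ℕ) : min (2^N) (k*k) ≤ 2^((N+1)/2) * k := by
  rcases le_total k (2^(N/2)) with hk | hk
  · have h1 : k ≤ 2^((N+1)/2) := le_trans hk (Nat.pow_le_pow_right (by norm_num) (by omega))
    exact le_trans (min_le_right _ _) (Nat.mul_le_mul_right k h1)
  · have h1 : (2:ℕ)^N = 2^((N+1)/2) * 2^(N/2) := by
      rw [← pow_add]
      congr 1
      omega
    refine le_trans (min_le_left _ _) ?_
    rw [h1]
    exact Nat.mul_le_mul_left _ hk

/-- output with encoder seeing `a`, true state `a` (delay 0 coupling) -/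
def yo0 {M N : ℕ} (c : Code Bool Bool Bool M N) (m : Fin M) (a : Fin N → Bool) : Fin N → Bool :=
  fun i => xor (c.enc m a i) (a i)

/-- output with encoder seeing `a`, true state `sh a e` (delay 1 coupling) -/
def yo1 {M N : ℕ} (c : Code Bool Bool Bool M N) (m : Fin M) (a : Fin N → Bool) (e : Bool) :
    Fin N → Bool :=
  fun i => xor (c.enc m a i) (sh a e i)

noncomputable def Gd {M N : ℕ} (c : Code Bool Bool Bool M N) :
    Finset (Fin M × (Fin N → Bool) × Bool) :=
  Finset.univ.filter (fun x => c.dec (yo0 c x.1 x.2.1) = x.1 ∧ c.dec (yo1 c x.1 x.2.1 x.2.2) = x.1)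

lemma good_card_le {M N : ℕ} (c : Code Bool Bool Bool M N) :
    (Gd c).card ≤ 2 ^ ((N+1)/2 + N + 1) := by
  classical
  -- fiberwise over m
  have hsplit : (Gd c).card = ∑ m : Fin M,
      (Finset.univ.filter (fun p : (Fin N → Bool) × Bool =>
        c.dec (yo0 c m p.1) = m ∧ c.dec (yo1 c m p.1 p.2) = m)).card := by
    unfold Gd
    rw [Finset.card_filter]
    rw [Fintype.sum_prod_type]
    congr 1
    funext m
    rw [Finset.card_filter]
  rw [hsplit]
  have hm : ∀ m : Fin M,
      (Finset.univ.filter (fun p : (Fin N → Bool) × Bool =>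
        c.dec (yo0 c m p.1) = m ∧ c.dec (yo1 c m p.1 p.2) = m)).card
      ≤ 2 * (2^((N+1)/2) * (Finset.univ.filter (fun y : Fin N → Bool => c.dec y = m)).card) := by
    intro m
    set Gm := Finset.univ.filter (fun p : (Fin N → Bool) × Bool =>
        c.dec (yo0 c m p.1) = m ∧ c.dec (yo1 c m p.1 p.2) = m) with hGm
    set Dm := Finset.univ.filter (fun y : Fin N → Bool => c.dec y = m) with hDm
    have step1 : Gm.card ≤ 2 * (Gm.image (fun p => dl p.1 p.2)).card := by
      apply Finset.card_le_mul_card_image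
      intro t _
      -- fiber injects into Bool via second component
      have : (Gm.filter (fun p => dl p.1 p.2 = t)).card ≤ Fintype.card Bool := by
        apply Finset.card_le_card_of_injOn (fun p => p.2)
        · intro p _; exact Finset.mem_univ _
        · intro p hp q hq hpq
          simp only [Finset.coe_filter, Set.mem_setOf_eq] at hp hq
          have hpq' : p.2 = q.2 := hpq
          have h1 : dl p.1 p.2 = dl q.1 p.2 := by
            rw [hp.2, hpq']
            exact hq.2.symm
          exact Prod.ext (dl_inj h1) hpq'
      simpa using this
    have step2 : (Gm.image (fun p => dl p.1 p.2)).card ≤ min (2^N) (Dm.card * Dm.card) := by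
      refine le_min ?_ ?_
      · calc (Gm.image (fun p => dl p.1 p.2)).card ≤ Fintype.card (Fin N → Bool) :=
              Finset.card_le_univ _
          _ = 2^N := by simp
      · have hsub : (Gm.image (fun p => dl p.1 p.2)) ⊆
            (Dm ×ˢ Dm).image (fun q : (Fin N → Bool) × (Fin N → Bool) =>
              fun i => xor (q.1 i) (q.2 i)) := by
          intro t ht
          rw [Finset.mem_image] at ht
          obtain ⟨p, hp, rfl⟩ := ht
          rw [hGm, Finset.mem_filter] at hp
          rw [Finset.mem_image]
          refine ⟨(yo0 c m p.1, yo1 c m p.1 p.2), ?_, ?_⟩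
          · rw [Finset.mem_product]
            constructor <;> (rw [hDm, Finset.mem_filter]) <;>
              exact ⟨Finset.mem_univ _, by simp [hp.2.1, hp.2.2]⟩
          · funext i
            simp only [yo0, yo1, dl]
            exact xor_xor_xor _ _ _
        calc (Gm.image (fun p => dl p.1 p.2)).card
            ≤ ((Dm ×ˢ Dm).image _).card := Finset.card_le_card hsub
          _ ≤ (Dm ×ˢ Dm).card := Finset.card_image_le
          _ = Dm.card * Dm.card := Finset.card_product _ _
    calc Gm.card ≤ 2 * (Gm.image (fun p => dl p.1 p.2)).card := step1
      _ ≤ 2 * min (2^N) (Dm.card * Dm.card) := by omega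
      _ ≤ 2 * (2^((N+1)/2) * Dm.card) := by
          have := minpow N Dm.card
          omega
  calc ∑ m : Fin M, _ ≤ ∑ m : Fin M,
        2 * (2^((N+1)/2) * (Finset.univ.filter (fun y : Fin N → Bool => c.dec y = m)).card) :=
        Finset.sum_le_sum (fun m _ => hm m)
    _ = 2 * (2^((N+1)/2) * ∑ m : Fin M,
        (Finset.univ.filter (fun y : Fin N → Bool => c.dec y = m)).card) := by
        rw [← Finset.mul_sum, ← Finset.mul_sum]
    _ = 2 * (2^((N+1)/2) * 2^N) := by
        congr 2
        have := (Finset.card_eq_sum_card_fiberwise (f := c.dec)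
          (s := (Finset.univ : Finset (Fin N → Bool))) (t := Finset.univ)
          (fun x _ => Finset.mem_univ _))
        rw [← this]
        simp
    _ = 2 ^ ((N+1)/2 + N + 1) := by ring

section Converse

variable {M N : ℕ} (c : Code Bool Bool Bool M N)

noncomputable def B0 : ℕ :=
  (Finset.univ.filter (fun x : Fin M × (Fin N → Bool) => c.dec (yo0 c x.1 x.2) ≠ x.1)).card

noncomputable def B1 : ℕ :=
  (Finset.univ.filter (fun x : Fin M × (Fin N → Bool) × Bool =>
    c.dec (yo1 c x.1 x.2.1 x.2.2) ≠ x.1)).card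

lemma total_le : M * 2^(N+1) ≤ (Gd c).card + 2 * B0 c + B1 c := by
  classical
  have hBad0 : (Finset.univ.filter (fun x : Fin M × (Fin N → Bool) × Bool =>
      c.dec (yo0 c x.1 x.2.1) ≠ x.1)).card = 2 * B0 c := by
    unfold B0
    rw [Finset.card_filter, Finset.card_filter]
    simp_rw [Fintype.sum_prod_type]
    rw [Finset.mul_sum]
    refine Finset.sum_congr rfl (fun m _ => ?_)
    rw [Finset.mul_sum]
    refine Finset.sum_congr rfl (fun a _ => ?_)
    by_cases hP : c.dec (yo0 c m a) ≠ m <;> simp [hP]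
  have hsub : (Finset.univ : Finset (Fin M × (Fin N → Bool) × Bool)) ⊆
      Gd c ∪ (Finset.univ.filter (fun x => c.dec (yo0 c x.1 x.2.1) ≠ x.1))
           ∪ (Finset.univ.filter (fun x => c.dec (yo1 c x.1 x.2.1 x.2.2) ≠ x.1)) := by
    intro x _
    by_cases h0 : c.dec (yo0 c x.1 x.2.1) = x.1
    · by_cases h1 : c.dec (yo1 c x.1 x.2.1 x.2.2) = x.1
      · exact Finset.mem_union_left _ (Finset.mem_union_left _
          (Finset.mem_filter.mpr ⟨Finset.mem_univ _, h0, h1⟩))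
      · exact Finset.mem_union_right _ (Finset.mem_filter.mpr ⟨Finset.mem_univ _, h1⟩)
    · exact Finset.mem_union_left _ (Finset.mem_union_right _
        (Finset.mem_filter.mpr ⟨Finset.mem_univ _, h0⟩))
  have hcard := Finset.card_le_card hsub
  have huniv : (Finset.univ : Finset (Fin M × (Fin N → Bool) × Bool)).card = M * 2^(N+1) := by
    simp only [Finset.card_univ, Fintype.card_prod, Fintype.card_fun, Fintype.card_bool,
      Fintype.card_fin]
    ring
  rw [huniv] at hcard
  calc M * 2^(N+1) ≤ _ := hcard
    _ ≤ (Gd c).card + 2 * B0 c + B1 c := by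
        refine le_trans (Finset.card_union_le _ _) ?_
        have := Finset.card_union_le (Gd c)
          (Finset.univ.filter (fun x : Fin M × (Fin N → Bool) × Bool =>
            c.dec (yo0 c x.1 x.2.1) ≠ x.1))
        rw [hBad0] at this
        unfold B1
        omega

lemma badCount_zero : badCount c 0 = 2^N * B0 c := by
  classical
  unfold badCount B0
  rw [Finset.card_filter, Finset.card_filter]
  simp_rw [Fintype.sum_prod_type]
  rw [Finset.mul_sum]
  refine Finset.sum_congr rfl (fun m _ => ?_)
  rw [Finset.mul_sum]
  refine Finset.sum_congr rfl (fun s _ => ?_)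
  have hout : ∀ z : Fin N → Bool, out c 0 m s z = yo0 c m s := by
    intro z
    unfold out yo0
    rw [sideInfo_zero]
  simp_rw [hout]
  by_cases hP : c.dec (yo0 c m s) ≠ m <;> simp [hP]

/-- reindexing `(s,z) ↦ (a,w)` where `a` is the delayed side info and `w` stores the rest -/
def theta (N' : ℕ) : ((Fin (N'+1) → Bool) × (Fin (N'+1) → Bool)) ≃
    ((Fin (N'+1) → Bool) × (Fin (N'+1) → Bool)) where
  toFun sz := (fun i => if (i:ℕ) = 0 then sz.2 i
                 else sz.1 ⟨(i:ℕ)-1, lt_of_le_of_lt (Nat.sub_le _ _) i.isLt⟩,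
               fun i => if (i:ℕ) = 0 then sz.1 ⟨N', Nat.lt_succ_self N'⟩ else sz.2 i)
  invFun aw := (fun i => if h : (i:ℕ)+1 < N'+1 then aw.1 ⟨(i:ℕ)+1, h⟩ else aw.2 0,
                fun i => if (i:ℕ) = 0 then aw.1 i else aw.2 i)
  left_inv := by
    rintro ⟨s, z⟩
    refine Prod.ext ?_ ?_ <;> funext i <;> simp only
    · by_cases h : (i:ℕ)+1 < N'+1
      · rw [dif_pos h, if_neg (by omega)]
        congr 1
      · rw [dif_neg h, if_pos (by simp)]
        congr 1
        exact Fin.ext (by have := i.isLt; simp; omega)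
    · by_cases h : (i:ℕ) = 0
      · rw [if_pos h, if_pos h]
      · rw [if_neg h, if_neg h]
  right_inv := by
    rintro ⟨a, w⟩
    refine Prod.ext ?_ ?_ <;> funext i <;> simp only
    · by_cases h : (i:ℕ) = 0
      · rw [if_pos h, if_pos h]
      · rw [if_neg h]
        have h2 : ((⟨(i:ℕ)-1, lt_of_le_of_lt (Nat.sub_le _ _) i.isLt⟩ : Fin (N'+1)):ℕ)+1 < N'+1 := by
          have := i.isLt
          simp only
          omega
        rw [dif_pos h2]
        congr 1
        exact Fin.ext (by simp; omega)
    · by_cases h : (i:ℕ) = 0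
      · rw [if_pos h]
        have h2 : ¬ ((N':ℕ)+1 < N'+1) := by omega
        rw [dif_neg (by simpa using h2)]
        congr 1
        exact Fin.ext (by simp [h])
      · rw [if_neg h, if_neg h]

lemma sum_head (N' : ℕ) (g : Bool → ℕ) :
    ∑ w : Fin (N'+1) → Bool, g (w 0) = 2^N' * ∑ e : Bool, g e := by
  rw [← (Fin.consEquiv (fun _ : Fin (N'+1) => Bool)).sum_comp (fun w => g (w 0))]
  rw [Fintype.sum_prod_type]
  simp only [Fin.consEquiv_apply, Fin.cons_zero]
  rw [Finset.mul_sum]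
  refine Finset.sum_congr rfl (fun b _ => ?_)
  rw [Finset.sum_const, Finset.card_univ]
  simp [mul_comm]

lemma theta_symm_out {M N' : ℕ} (c : Code Bool Bool Bool M (N'+1)) (m : Fin M)
    (aw : (Fin (N'+1) → Bool) × (Fin (N'+1) → Bool)) :
    out c 1 m ((theta N').symm aw).1 ((theta N').symm aw).2 = yo1 c m aw.1 (aw.2 0) := by
  obtain ⟨a, w⟩ := aw
  have hsz : ((theta N').symm (a, w)).1 =
      (fun i : Fin (N'+1) => if h : (i:ℕ)+1 < N'+1 then a ⟨(i:ℕ)+1, h⟩ else w 0) ∧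
      ((theta N').symm (a, w)).2 = (fun i : Fin (N'+1) => if (i:ℕ) = 0 then a i else w i) := by
    constructor <;> rfl
  set s := ((theta N').symm (a, w)).1 with hs
  set z := ((theta N').symm (a, w)).2 with hz
  have hshift : s = sh a (w 0) := by
    rw [hsz.1]
    funext i
    unfold sh
    rfl
  have hside : sideInfo (N'+1) 1 s z = a := by
    funext i
    rw [sideInfo_one]
    by_cases h : 1 ≤ (i:ℕ)
    · rw [dif_pos h, hsz.1]
      simp only
      have h2 : (i:ℕ)-1+1 < N'+1 := by have := i.isLt; omega
      rw [dif_pos h2]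
      congr 1
      exact Fin.ext (by simp; omega)
    · rw [dif_neg h, hsz.2]
      simp only
      rw [if_pos (by omega)]
  unfold out yo1
  rw [hside, ← hshift]

lemma badCount_one {M N' : ℕ} (c : Code Bool Bool Bool M (N'+1)) :
    badCount c 1 = 2^N' * B1 c := by
  classical
  unfold badCount B1
  rw [Finset.card_filter, Finset.card_filter]
  simp_rw [Fintype.sum_prod_type]
  rw [Finset.mul_sum]
  refine Finset.sum_congr rfl (fun m _ => ?_)
  have e1 : (∑ s : Fin (N'+1) → Bool, ∑ z : Fin (N'+1) → Bool,
      (if c.dec (out c 1 m s z) ≠ m then (1:ℕ) else 0))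
      = ∑ p : (Fin (N'+1) → Bool) × (Fin (N'+1) → Bool),
        (if c.dec (out c 1 m p.1 p.2) ≠ m then (1:ℕ) else 0) := by
    rw [Fintype.sum_prod_type]
  rw [e1]
  rw [← Equiv.sum_comp (theta N').symm
    (fun p : (Fin (N'+1) → Bool) × (Fin (N'+1) → Bool) =>
      (if c.dec (out c 1 m p.1 p.2) ≠ m then (1:ℕ) else 0))]
  simp_rw [theta_symm_out c m]
  rw [Fintype.sum_prod_type]
  rw [Finset.mul_sum]
  refine Finset.sum_congr rfl (fun a _ => ?_)
  exact sum_head N' (fun e => if c.dec (yo1 c m a e) ≠ m then (1:ℕ) else 0)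

lemma converse_bound {M N' : ℕ} (hM : 0 < M) (c : Code Bool Bool Bool M (N'+1)) :
    (M:ℝ) * (1 - errProb bscW (bern (1/2)) c 0 - errProb bscW (bern (1/2)) c 1)
      ≤ 2 ^ ((N'+2)/2) := by
  have hMr : (0:ℝ) < M := by exact_mod_cast hM
  have hM0 : (M:ℝ) ≠ 0 := ne_of_gt hMr
  have hP : (0:ℝ) < 2^(N'+2) := by positivity
  have he0 : (M:ℝ) * errProb bscW (bern (1/2)) c 0 = 2 * (B0 c : ℝ) / 2^(N'+2) := by
    rw [errProb_eq, badCount_zero]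
    push_cast
    field_simp
    ring
  have he1 : (M:ℝ) * errProb bscW (bern (1/2)) c 1 = (B1 c : ℝ) / 2^(N'+2) := by
    rw [errProb_eq, badCount_one]
    push_cast
    field_simp
    ring
  have h3 : M * 2^(N'+1+1) ≤ 2^((N'+1+1)/2 + (N'+1) + 1) + 2 * B0 c + B1 c := by
    have h1 := total_le c
    have h2 := good_card_le c
    omega
  have htot : (M:ℝ) * 2^(N'+2) ≤ 2^((N'+2)/2) * 2^(N'+2) + (2*(B0 c:ℝ) + (B1 c:ℝ)) := by
    have hc : ((M * 2^(N'+1+1) : ℕ) : ℝ) ≤ ((2^((N'+1+1)/2 + (N'+1) + 1) + 2 * B0 c + B1 c : ℕ) : ℝ) := by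
      exact_mod_cast h3
    push_cast at hc
    have hpow : ((2:ℝ)^((N'+1+1)/2 + (N'+1) + 1)) = 2^((N'+2)/2) * 2^(N'+2) := by
      rw [← pow_add]
      congr 1
    rw [hpow] at hc
    linarith
  have expand : (M:ℝ) * (1 - errProb bscW (bern (1/2)) c 0 - errProb bscW (bern (1/2)) c 1)
      = (M:ℝ) - 2*(B0 c:ℝ)/2^(N'+2) - (B1 c:ℝ)/2^(N'+2) := by
    rw [mul_sub, mul_sub, mul_one, he0, he1]
  rw [expand]
  have key : ((M:ℝ) - 2*(B0 c:ℝ)/2^(N'+2) - (B1 c:ℝ)/2^(N'+2)) * 2^(N'+2)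
      ≤ 2^((N'+2)/2) * 2^(N'+2) := by
    have hexp : ((M:ℝ) - 2*(B0 c:ℝ)/2^(N'+2) - (B1 c:ℝ)/2^(N'+2)) * 2^(N'+2)
        = (M:ℝ)*2^(N'+2) - (2*(B0 c:ℝ) + (B1 c:ℝ)) := by
      field_simp
      ring
    rw [hexp]
    linarith
  exact le_of_mul_le_mul_right key hP

end Converse

lemma achievable_le_half {R : ℝ} (h : Achievable bscW (bern (1/2)) 0 1 R) : R ≤ 1/2 := by
  obtain ⟨Msz, c, hM, herr⟩ := h
  have h0 := herr 0 (by norm_num) (by norm_num)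
  have h1 := herr 1 (by norm_num) (by norm_num)
  have hsum : Filter.Tendsto
      (fun n => errProb bscW (bern (1/2)) (c n) 0 + errProb bscW (bern (1/2)) (c n) 1)
      Filter.atTop (nhds 0) := by
    simpa using h0.add h1
  have hev : ∀ᶠ n in Filter.atTop,
      errProb bscW (bern (1/2)) (c n) 0 + errProb bscW (bern (1/2)) (c n) 1 ≤ 1/2 := by
    have : Set.Iic (1/2 : ℝ) ∈ nhds (0:ℝ) := Iic_mem_nhds (by norm_num)
    exact (hsum.eventually (show ∀ᶠ y in nhds (0:ℝ), y ≤ 1/2 from this)).mono (fun x hx => by norm_num at hx ⊢; linarith)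
  obtain ⟨N0, hN0⟩ := Filter.eventually_atTop.mp hev
  refine le_of_forall_pos_le_add (fun ε hε => ?_)
  set N' := max N0 (⌈3/(2*ε)⌉₊) with hN'
  set n := N' + 1 with hn
  have hnN0 : N0 ≤ n := by
    have := le_max_left N0 (⌈3/(2*ε)⌉₊)
    omega
  have hMpos : 0 < Msz n := by
    rcases Nat.eq_zero_or_pos (Msz n) with h | h
    · exfalso
      have hb := hM n
      rw [h] at hb
      have := Real.rpow_pos_of_pos (by norm_num : (0:ℝ) < 2) ((n:ℝ) * R)
      simp at hb
      linarith
    · exact h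
  have hcb := converse_bound hMpos (c n)
  have hhalf := hN0 n hnN0
  have hmul : (2:ℝ)^((n:ℝ)*R) * (1/2) ≤ (Msz n : ℝ) *
      (1 - errProb bscW (bern (1/2)) (c n) 0 - errProb bscW (bern (1/2)) (c n) 1) := by
    apply mul_le_mul (hM n) (by linarith) (by norm_num) (Nat.cast_nonneg _)
  have h2 : (2:ℝ)^((n:ℝ)*R) ≤ (2:ℝ)^(((N'+2)/2 + 1 : ℕ)) := by
    have hch := le_trans hmul hcb
    calc (2:ℝ)^((n:ℝ)*R) = ((2:ℝ)^((n:ℝ)*R) * (1/2)) * 2 := by ring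
      _ ≤ (2:ℝ)^((N'+2)/2 : ℕ) * 2 := by linarith
      _ = (2:ℝ)^(((N'+2)/2 + 1 : ℕ)) := by rw [pow_succ]
  have h4 : (n:ℝ)*R ≤ (((N'+2)/2 + 1 : ℕ) : ℝ) := by
    rw [← Real.rpow_natCast 2 ((N'+2)/2 + 1)] at h2
    exact (Real.rpow_le_rpow_left_iff (by norm_num)).mp h2
  have h5 : ((((N'+2)/2 + 1 : ℕ)):ℝ) ≤ ((n:ℝ)+1)/2 + 1 := by
    have hd := Nat.cast_div_le (α := ℝ) (m := N'+2) (n := 2)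
    push_cast
    push_cast at hd
    have : (n:ℝ) = (N':ℝ) + 1 := by rw [hn, Nat.cast_succ]
    linarith
  have hnpos : (0:ℝ) < n := by
    have : 0 < n := by omega
    exact_mod_cast this
  have hR : R ≤ (((n:ℝ)+1)/2 + 1)/n := by
    rw [le_div_iff₀ hnpos]
    calc R * n = (n:ℝ) * R := by ring
      _ ≤ _ := le_trans h4 h5
  have hce : (3:ℝ)/(2*ε) ≤ n := by
    have h6 : (3:ℝ)/(2*ε) ≤ (⌈3/(2*ε)⌉₊ : ℝ) := Nat.le_ceil _
    have h7 : (⌈3/(2*ε)⌉₊ : ℕ) ≤ n := by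
      have := le_max_right N0 (⌈3/(2*ε)⌉₊)
      omega
    have h8 : ((⌈3/(2*ε)⌉₊ : ℕ) : ℝ) ≤ (n:ℝ) := by exact_mod_cast h7
    linarith
  have h9 : (3:ℝ) ≤ (n:ℝ) * (2*ε) := by
    rw [div_le_iff₀ (by positivity)] at hce
    linarith
  have h10 : (((n:ℝ)+1)/2 + 1)/n ≤ 1/2 + ε := by
    rw [div_le_iff₀ hnpos]
    have : (1/2 + ε) * n = n/2 + ε*n := by ring
    rw [this]
    nlinarith
  linarith
def bitf (m j : ℕ) : Bool := (m / 2^j) % 2 = 1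

def valB (k : ℕ) (u : ℕ → Bool) : ℕ := ∑ j ∈ Finset.range k, 2^j * (if u j then 1 else 0)

lemma valB_lt (k : ℕ) (u : ℕ → Bool) : valB k u < 2^k := by
  induction k with
  | zero => simp [valB]
  | succ k ih =>
    unfold valB at *
    rw [Finset.sum_range_succ]
    have : 2^k * (if u k then 1 else 0) ≤ 2^k := by
      by_cases h : u k <;> simp [h]
    have h2 : (2:ℕ)^(k+1) = 2^k + 2^k := by rw [pow_succ]; ring
    omega

lemma valB_bitf (k : ℕ) (u : ℕ → Bool) {j : ℕ} (hj : j < k) : bitf (valB k u) j = u j := by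
  induction k with
  | zero => omega
  | succ k ih =>
    unfold valB at *
    rw [Finset.sum_range_succ]
    rcases Nat.lt_or_ge j k with h | h
    · -- adding 2^k * c doesn't change bit j < k
      have h4 : (2:ℕ)^k = 2^j * (2 * 2^(k-j-1)) := by
        rw [← pow_succ', ← pow_add]
        congr 1
        omega
      have hev : 2^k * (if u k then 1 else 0)
          = 2^j * (2 * (2^(k-j-1) * (if u k then 1 else 0))) := by
        rw [h4]
        ring
      unfold bitf
      rw [hev, Nat.add_mul_div_left _ _ (Nat.two_pow_pos j),
        Nat.add_mul_mod_self_left]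
      exact ih h
    · have hjk : j = k := by omega
      subst hjk
      unfold bitf
      have hlt : (∑ i ∈ Finset.range j, 2^i * (if u i then 1 else 0)) < 2^j := valB_lt j u
      rw [Nat.add_mul_div_left _ _ (Nat.two_pow_pos j),
        Nat.div_eq_of_lt hlt]
      by_cases h : u j <;> simp [h]

lemma valB_bits (k m : ℕ) (hm : m < 2^k) : valB k (bitf m) = m := by
  induction k generalizing m with
  | zero => simp [valB]; omega
  | succ k ih =>
    unfold valB at *
    rw [Finset.sum_range_succ]
    have h1 : m % 2^(k+1) = m := Nat.mod_eq_of_lt hm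
    have h2 : m % (2^k * 2) = m % 2^k + 2^k * (m / 2^k % 2) := Nat.mod_mul
    have h3 : (2:ℕ)^(k+1) = 2^k * 2 := by rw [pow_succ]
    have hsum : ∀ j ∈ Finset.range k, 2^j * (if bitf m j then 1 else 0)
        = 2^j * (if bitf (m % 2^k) j then 1 else 0) := by
      intro j hj
      rw [Finset.mem_range] at hj
      have key : bitf m j = bitf (m % 2^k) j := by
        unfold bitf
        have h4 : m = m % 2^k + 2^j * (2 * (2^(k-j-1) * (m / 2^k))) := by
          have h5 := Nat.div_add_mod m (2^k)
          have h6 : (2:ℕ)^k = 2^j * (2 * 2^(k-j-1)) := by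
            rw [← pow_succ', ← pow_add]
            congr 1
            omega
          calc m = 2^k * (m/2^k) + m % 2^k := h5.symm
            _ = m % 2^k + 2^j * (2 * (2^(k-j-1) * (m/2^k))) := by rw [h6]; ring
        conv_lhs => rw [h4]
        rw [Nat.add_mul_div_left _ _ (Nat.two_pow_pos j),
          Nat.add_mul_mod_self_left]
      rw [key]
    rw [Finset.sum_congr rfl hsum, ih (m % 2^k) (Nat.mod_lt _ (Nat.two_pow_pos k))]
    have hbit : (if bitf m k then 1 else 0) = m / 2^k % 2 := by
      unfold bitf
      rcases Nat.mod_two_eq_zero_or_one (m / 2^k) with h | h <;> simp [h]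
    rw [hbit]
    rw [← h3] at h2
    omega


section Achieve

/-- number of information bit pairs -/
def kOf (N : ℕ) : ℕ := (N-1)/2

lemma kOf_le (N : ℕ) : 2 * kOf N + 1 ≤ max N 1 := by
  unfold kOf
  omega

def liftF {N : ℕ} (y : Fin N → Bool) : ℕ → Bool :=
  fun i => if h : i < N then y ⟨i, h⟩ else false

def myEnc (N M : ℕ) : Fin M → (Fin N → Bool) → Fin N → Bool :=
  fun m a i =>
    if h0 : (i:ℕ) % 2 = 0 then
      (if (i:ℕ)/2 < kOf N then xor (bitf m ((i:ℕ)/2)) (a i) else false)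
    else
      (if h : (i:ℕ)/2 < kOf N then
        xor (bitf m ((i:ℕ)/2)) (a ⟨(i:ℕ)+1, by
          have h1 := i.isLt
          have h2 : (i:ℕ) % 2 = 1 := by omega
          have h3 : (i:ℕ)/2 < (N-1)/2 := h
          omega⟩)
      else false)

noncomputable def myDec (N M : ℕ) (hM : 0 < M) : (Fin N → Bool) → Fin M :=
  fun y =>
    if h : valB (kOf N) (fun j => liftF y (2*j)) < M then ⟨_, h⟩
    else if h2 : valB (kOf N) (fun j => liftF y (2*j+1)) < M then ⟨_, h2⟩
    else ⟨0, hM⟩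

noncomputable def myCode (N M : ℕ) (hM : 0 < M) : Code Bool Bool Bool M N :=
  ⟨myEnc N M, myDec N M hM⟩

lemma card_filter_evens (N k : ℕ) (hk : 2*k ≤ N) :
    (Finset.univ.filter (fun i : Fin N => (i:ℕ)%2 = 0 ∧ (i:ℕ)/2 < k)).card = k := by
  have himg : Finset.univ.filter (fun i : Fin N => (i:ℕ)%2 = 0 ∧ (i:ℕ)/2 < k)
      = Finset.image (fun j : Fin k => (⟨2*(j:ℕ), by have := j.isLt; omega⟩ : Fin N))
          Finset.univ := by
    ext i
    simp only [Finset.mem_filter, Finset.mem_image, Finset.mem_univ, true_and]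
    constructor
    · rintro ⟨h1, h2⟩
      exact ⟨⟨(i:ℕ)/2, h2⟩, Fin.ext (by simp; omega)⟩
    · rintro ⟨j, rfl⟩
      have := j.isLt
      constructor <;> simp <;> omega
  rw [himg, Finset.card_image_of_injective _ (fun j j' hjj => by
    have : 2*(j:ℕ) = 2*(j':ℕ) := congrArg Fin.val hjj
    exact Fin.ext (by omega))]
  simp

lemma card_zero_on (N : ℕ) (P : Fin N → Prop) [DecidablePred P] :
    (Finset.univ.filter (fun s : Fin N → Bool => ∀ i, P i → s i = false)).card
      = 2^(Fintype.card {i : Fin N // ¬ P i}) := by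
  classical
  rw [← Fintype.card_subtype]
  have e : {s : Fin N → Bool // ∀ i, P i → s i = false} ≃ ({i : Fin N // ¬ P i} → Bool) :=
    { toFun := fun f j => f.1 j.1
      invFun := fun g => ⟨fun i => if h : P i then false else g ⟨i, h⟩, fun i hi => dif_pos hi⟩
      left_inv := by
        intro f
        apply Subtype.ext
        funext i
        by_cases h : P i
        · simp [h, (f.2 i h)]
        · simp [h]
      right_inv := by
        intro g
        funext j
        simp [j.2] }
  rw [Fintype.card_congr e]
  simp

end Achieve

section AchieveErr

lemma xor_cancel_right (b x : Bool) : xor (xor b x) x = b := by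
  cases b <;> cases x <;> rfl

lemma enc_even {N M : ℕ} (m : Fin M) (a : Fin N → Bool) (i : Fin N)
    (h0 : (i:ℕ) % 2 = 0) (hk : (i:ℕ)/2 < kOf N) :
    myEnc N M m a i = xor (bitf m ((i:ℕ)/2)) (a i) := by
  unfold myEnc
  rw [dif_pos h0, if_pos hk]

lemma enc_odd {N M : ℕ} (m : Fin M) (a : Fin N → Bool) (i : Fin N)
    (h0 : ¬((i:ℕ) % 2 = 0)) (hk : (i:ℕ)/2 < kOf N) :
    myEnc N M m a i = xor (bitf m ((i:ℕ)/2))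
      (a ⟨(i:ℕ)+1, by
        have h1 := i.isLt
        have h3 : (i:ℕ)/2 < (N-1)/2 := hk
        omega⟩) := by
  unfold myEnc
  rw [dif_neg h0, dif_pos hk]

lemma twoj_lt {N j : ℕ} (hj : j < kOf N) : 2*j + 1 < N := by
  have : j < (N-1)/2 := hj
  omega

/-- at even positions, delay-0 output carries the message bits -/
lemma out0_even {N M : ℕ} (hM : 0 < M) (m : Fin M) (s z : Fin N → Bool)
    {j : ℕ} (hj : j < kOf N) :
    liftF (out (myCode N M hM) 0 m s z) (2*j) = bitf m j := by
  have h2j : 2*j < N := by have := twoj_lt hj; omega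
  unfold liftF
  rw [dif_pos h2j]
  show out (myCode N M hM) 0 m s z ⟨2*j, h2j⟩ = bitf m j
  unfold out
  rw [sideInfo_zero]
  show xor (myEnc N M m s ⟨2*j, h2j⟩) (s ⟨2*j, h2j⟩) = bitf m j
  rw [enc_even m s ⟨2*j, h2j⟩ (by show 2*j % 2 = 0; omega)
    (by show 2*j/2 < kOf N; have h := hj; omega)]
  rw [xor_cancel_right]
  have hdiv : ((⟨2*j, h2j⟩ : Fin N) : ℕ)/2 = j := by show 2*j/2 = j; omega
  rw [hdiv]

/-- at odd positions, delay-1 output carries the message bits -/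
lemma out1_odd {N M : ℕ} (hM : 0 < M) (m : Fin M) (s z : Fin N → Bool)
    {j : ℕ} (hj : j < kOf N) :
    liftF (out (myCode N M hM) 1 m s z) (2*j+1) = bitf m j := by
  have h2j : 2*j+1 < N := twoj_lt hj
  unfold liftF
  rw [dif_pos h2j]
  show out (myCode N M hM) 1 m s z ⟨2*j+1, h2j⟩ = bitf m j
  unfold out
  show xor (myEnc N M m (sideInfo N 1 s z) ⟨2*j+1, h2j⟩) (s ⟨2*j+1, h2j⟩) = bitf m j
  rw [enc_odd m _ ⟨2*j+1, h2j⟩ (by show ¬((2*j+1) % 2 = 0); omega)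
    (by show (2*j+1)/2 < kOf N; have h := hj; omega)]
  have hside : sideInfo N 1 s z ⟨(((⟨2*j+1, h2j⟩ : Fin N)):ℕ)+1, by
        have he : (((⟨2*j+1, h2j⟩ : Fin N)):ℕ) = 2*j+1 := rfl
        have h1 : 2*j+1 < N := h2j
        have h3 : j < (N-1)/2 := hj
        omega⟩
      = s ⟨2*j+1, h2j⟩ := by
    rw [sideInfo_one]
    rw [dif_pos (by show 1 ≤ 2*j+1+1; omega)]
    congr 1
  rw [hside, xor_cancel_right]
  have hdiv : ((⟨2*j+1, h2j⟩ : Fin N) : ℕ)/2 = j := by show (2*j+1)/2 = j; omega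
  rw [hdiv]

lemma err0 {N M : ℕ} (hM : 0 < M) (hMk : M ≤ 2^(kOf N)) :
    errProb bscW (bern (1/2)) (myCode N M hM) 0 = 0 := by
  rw [errProb_eq]
  have hbad : badCount (myCode N M hM) 0 = 0 := by
    unfold badCount
    rw [Finset.card_eq_zero, Finset.filter_eq_empty_iff]
    rintro ⟨m, s, z⟩ -
    simp only [ne_eq, not_not]
    have hval : valB (kOf N) (fun j => liftF (out (myCode N M hM) 0 m s z) (2*j)) = (m:ℕ) := by
      have hcongr : valB (kOf N) (fun j => liftF (out (myCode N M hM) 0 m s z) (2*j))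
          = valB (kOf N) (bitf (m:ℕ)) := by
        unfold valB
        refine Finset.sum_congr rfl (fun j hj => ?_)
        rw [Finset.mem_range] at hj
        simp only [out0_even hM m s z hj]
      rw [hcongr]
      exact valB_bits _ _ (lt_of_lt_of_le m.isLt hMk)
    show myDec N M hM (out (myCode N M hM) 0 m s z) = m
    unfold myDec
    rw [dif_pos (by rw [hval]; exact m.isLt)]
    exact Fin.ext (by simpa using hval)
  rw [hbad]
  simp

end AchieveErr

section Err1

/-- zero out the even information positions -/
def killEvens {N : ℕ} (k : ℕ) (s : Fin N → Bool) : Fin N → Bool :=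
  fun i => if ((i:ℕ)%2 = 0 ∧ (i:ℕ)/2 < k) then false else s i

lemma out1_even {N M : ℕ} (hM : 0 < M) (m : Fin M) (s z : Fin N → Bool)
    (i : Fin N) (hP : (i:ℕ)%2 = 0) (hk : (i:ℕ)/2 < kOf N) :
    liftF (out (myCode N M hM) 1 m s z) (2*((i:ℕ)/2))
      = xor (xor (bitf m ((i:ℕ)/2))
          (if h : 1 ≤ (i:ℕ) then s ⟨(i:ℕ)-1, by have := i.isLt; omega⟩ else z i)) (s i) := by
  have hi2 : 2*((i:ℕ)/2) = (i:ℕ) := by omega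
  have hlift : liftF (out (myCode N M hM) 1 m s z) (2*((i:ℕ)/2))
      = out (myCode N M hM) 1 m s z i := by
    unfold liftF
    rw [dif_pos (show 2*((i:ℕ)/2) < N by rw [hi2]; exact i.isLt)]
    congr 1
    exact Fin.ext hi2
  rw [hlift]
  show xor (myEnc N M m (sideInfo N 1 s z) i) (s i) = _
  rw [enc_even m _ i hP hk, sideInfo_one]

lemma valB_out1_odd {N M : ℕ} (hM : 0 < M) (hMk : M ≤ 2^(kOf N)) (m : Fin M)
    (s z : Fin N → Bool) :
    valB (kOf N) (fun j => liftF (out (myCode N M hM) 1 m s z) (2*j+1)) = (m:ℕ) := by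
  have hcongr : valB (kOf N) (fun j => liftF (out (myCode N M hM) 1 m s z) (2*j+1))
      = valB (kOf N) (bitf (m:ℕ)) := by
    unfold valB
    refine Finset.sum_congr rfl (fun j hj => ?_)
    rw [Finset.mem_range] at hj
    simp only [out1_odd hM m s z hj]
  rw [hcongr]
  exact valB_bits _ _ (lt_of_lt_of_le m.isLt hMk)

lemma badCount_one_le {N M : ℕ} (hM : 0 < M) (hMk : M ≤ 2^(kOf N)) :
    badCount (myCode N M hM) 1 ≤ M * (M * (2^(N - kOf N) * 2^N)) := by
  classical
  set c := myCode N M hM with hc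
  set k := kOf N with hkdef
  -- split over m
  have hsplit : badCount c 1 = ∑ m : Fin M,
      (Finset.univ.filter (fun p : (Fin N → Bool) × (Fin N → Bool) =>
        c.dec (out c 1 m p.1 p.2) ≠ m)).card := by
    unfold badCount
    rw [Finset.card_filter]
    rw [Fintype.sum_prod_type]
    refine Finset.sum_congr rfl (fun m _ => ?_)
    rw [Finset.card_filter]
  rw [hsplit]
  have hbound : ∀ m : Fin M,
      (Finset.univ.filter (fun p : (Fin N → Bool) × (Fin N → Bool) =>
        c.dec (out c 1 m p.1 p.2) ≠ m)).card ≤ M * (2^(N - k) * 2^N) := by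
    intro m
    set um : ((Fin N → Bool) × (Fin N → Bool)) → ℕ :=
      fun p => valB k (fun j => liftF (out c 1 m p.1 p.2) (2*j)) with hum
    -- bad events give valU < M and ≠ m
    have hQ : ∀ p : (Fin N → Bool) × (Fin N → Bool),
        c.dec (out c 1 m p.1 p.2) ≠ m → um p < M ∧ um p ≠ (m:ℕ) := by
      intro p hne
      have hvm := valB_out1_odd hM hMk m p.1 p.2
      by_cases h : um p < M
      · refine ⟨h, fun heq => hne ?_⟩
        show myDec N M hM (out c 1 m p.1 p.2) = m
        unfold myDec
        rw [dif_pos h]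
        exact Fin.ext (by simpa using heq)
      · exfalso
        apply hne
        show myDec N M hM (out c 1 m p.1 p.2) = m
        unfold myDec
        rw [dif_neg h, dif_pos (by rw [hvm]; exact m.isLt)]
        exact Fin.ext (by simpa using hvm)
    -- injection into the product
    set T := (((Finset.range M).erase (m:ℕ)) ×ˢ
      ((Finset.univ.filter (fun s' : Fin N → Bool =>
        ∀ i : Fin N, ((i:ℕ)%2 = 0 ∧ (i:ℕ)/2 < k) → s' i = false)) ×ˢ
       (Finset.univ : Finset (Fin N → Bool)))) with hT
    have hinj : (Finset.univ.filter (fun p : (Fin N → Bool) × (Fin N → Bool) =>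
        c.dec (out c 1 m p.1 p.2) ≠ m)).card ≤ T.card := by
      apply Finset.card_le_card_of_injOn
        (fun p => (um p, (killEvens k p.1, p.2)))
      · intro p hp
        rw [Finset.mem_coe, Finset.mem_filter] at hp
        obtain ⟨hul, hun⟩ := hQ p hp.2
        rw [hT, Finset.mem_coe, Finset.mem_product, Finset.mem_product]
        refine ⟨Finset.mem_erase.mpr ⟨hun, Finset.mem_range.mpr hul⟩, ?_, Finset.mem_univ _⟩
        rw [Finset.mem_filter]
        exact ⟨Finset.mem_univ _, fun i hPi => if_pos hPi⟩
      · intro p hp q hq himg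
        simp only [Finset.coe_filter, Set.mem_setOf_eq] at hp hq
        have hv : um p = um q := congrArg Prod.fst himg
        have hkz : killEvens k p.1 = killEvens k q.1 :=
          congrArg (fun x => x.2.1) himg
        have hz : p.2 = q.2 := congrArg (fun x => x.2.2) himg
        refine Prod.ext ?_ hz
        funext i
        by_cases hPi : ((i:ℕ)%2 = 0 ∧ (i:ℕ)/2 < k)
        · -- even info position: recover from um and odd positions
          have hb : bitf (um p) ((i:ℕ)/2) = bitf (um q) ((i:ℕ)/2) := by rw [hv]
          rw [hum] at hb
          rw [valB_bitf k _ hPi.2, valB_bitf k _ hPi.2] at hb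
          rw [out1_even hM m p.1 p.2 i hPi.1 hPi.2,
            out1_even hM m q.1 q.2 i hPi.1 hPi.2] at hb
          have hA : (if h : 1 ≤ (i:ℕ) then p.1 ⟨(i:ℕ)-1, by have := i.isLt; omega⟩ else p.2 i)
              = (if h : 1 ≤ (i:ℕ) then q.1 ⟨(i:ℕ)-1, by have := i.isLt; omega⟩ else q.2 i) := by
            by_cases h1 : 1 ≤ (i:ℕ)
            · rw [dif_pos h1, dif_pos h1]
              have hodd : ¬((((⟨(i:ℕ)-1, by have := i.isLt; omega⟩ : Fin N)):ℕ)%2 = 0 ∧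
                  (((⟨(i:ℕ)-1, by have := i.isLt; omega⟩ : Fin N)):ℕ)/2 < k) := by
                have hv2 : (((⟨(i:ℕ)-1, by have := i.isLt; omega⟩ : Fin N)):ℕ) = (i:ℕ)-1 := rfl
                rw [hv2]
                have := hPi.1
                omega
              have := congrFun hkz ⟨(i:ℕ)-1, by have := i.isLt; omega⟩
              unfold killEvens at this
              rw [if_neg hodd, if_neg hodd] at this
              exact this
            · rw [dif_neg h1, dif_neg h1, hz]
          rw [hA] at hb
          exact Bool.xor_right_inj.mp hb
        · have := congrFun hkz i
          unfold killEvens at this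
          rw [if_neg hPi, if_neg hPi] at this
          exact this
    refine le_trans hinj ?_
    rw [hT, Finset.card_product, Finset.card_product,
      Finset.card_erase_of_mem (Finset.mem_range.mpr m.isLt)]
    have hZ : (Finset.univ.filter (fun s' : Fin N → Bool =>
        ∀ i : Fin N, ((i:ℕ)%2 = 0 ∧ (i:ℕ)/2 < k) → s' i = false)).card = 2^(N-k) := by
      rw [card_zero_on N (fun i : Fin N => ((i:ℕ)%2 = 0 ∧ (i:ℕ)/2 < k))]
      congr 1
      rw [Fintype.card_subtype_compl, Fintype.card_subtype, card_filter_evens N k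
        (by rw [hkdef]; unfold kOf; omega)]
      simp
    rw [hZ, Finset.card_range, Finset.card_univ]
    have hcard : Fintype.card (Fin N → Bool) = 2^N := by simp
    rw [hcard]
    exact Nat.mul_le_mul_right (2^(N-k) * 2^N) (Nat.sub_le M 1)
  calc ∑ m : Fin M, (Finset.univ.filter (fun p : (Fin N → Bool) × (Fin N → Bool) =>
        c.dec (out c 1 m p.1 p.2) ≠ m)).card
      ≤ ∑ _m : Fin M, M * (2^(N - k) * 2^N) :=
        Finset.sum_le_sum (fun m _ => hbound m)
    _ = M * (M * (2^(N - k) * 2^N)) := by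
        rw [Finset.sum_const, Finset.card_univ, Fintype.card_fin, smul_eq_mul]

lemma err1 {N M : ℕ} (hM : 0 < M) (hMk : M ≤ 2^(kOf N)) :
    errProb bscW (bern (1/2)) (myCode N M hM) 1 ≤ (M:ℝ) / 2^(kOf N) := by
  rw [errProb_eq]
  have hkN : kOf N ≤ N := by unfold kOf; omega
  have hb : (badCount (myCode N M hM) 1 : ℝ) ≤ (M:ℝ) * ((M:ℝ) * ((2:ℝ)^(N - kOf N) * 2^N)) := by
    have := badCount_one_le hM hMk
    calc (badCount (myCode N M hM) 1 : ℝ)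
        ≤ ((M * (M * (2^(N - kOf N) * 2^N)) : ℕ) : ℝ) := by exact_mod_cast this
      _ = (M:ℝ) * ((M:ℝ) * ((2:ℝ)^(N - kOf N) * 2^N)) := by push_cast; ring
  have hMr : (0:ℝ) < M := by exact_mod_cast hM
  have hpos : (0:ℝ) < (M:ℝ)⁻¹ * ((2:ℝ)^N)⁻¹ * ((2:ℝ)^N)⁻¹ := by positivity
  have hpow : (2:ℝ)^(N - kOf N) * 2^(kOf N) = 2^N := by
    rw [← pow_add]
    congr 1
    omega
  calc (M : ℝ)⁻¹ * ((2:ℝ)^N)⁻¹ * ((2:ℝ)^N)⁻¹ * (badCount (myCode N M hM) 1 : ℝ)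
      ≤ (M : ℝ)⁻¹ * ((2:ℝ)^N)⁻¹ * ((2:ℝ)^N)⁻¹ *
        ((M:ℝ) * ((M:ℝ) * ((2:ℝ)^(N - kOf N) * 2^N))) := by
        exact mul_le_mul_of_nonneg_left hb (le_of_lt hpos)
    _ = (M:ℝ) / 2^(kOf N) := by
        field_simp
        linear_combination hpow

end Err1

lemma errProb_nonneg {M N : ℕ} (c : Code Bool Bool Bool M N) (d : ℤ) :
    0 ≤ errProb bscW (bern (1/2)) c d := by
  rw [errProb_eq]
  positivity

lemma achievable_of_lt_half {R : ℝ} (hR : R < 1/2) : Achievable bscW (bern (1/2)) 0 1 R := by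
  set R' := max R 0 with hR'def
  have hR'0 : 0 ≤ R' := le_max_right _ _
  have hR' : R' < 1/2 := max_lt hR (by norm_num)
  set Msz : ℕ → ℕ := fun n => max 1 ⌈(2:ℝ)^((n:ℝ)*R)⌉₊ with hMsz
  have hMpos : ∀ n, 0 < Msz n := fun n => lt_of_lt_of_le one_pos (le_max_left _ _)
  refine ⟨Msz, fun n => myCode n (Msz n) (hMpos n), ?_, ?_⟩
  · intro n
    calc (2:ℝ)^((n:ℝ)*R) ≤ (⌈(2:ℝ)^((n:ℝ)*R)⌉₊ : ℝ) := Nat.le_ceil _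
      _ ≤ (Msz n : ℝ) := by exact_mod_cast le_max_right 1 _
  · intro d hd1 hd2
    have hMb : ∀ n : ℕ, (Msz n : ℝ) ≤ (2:ℝ)^((n:ℝ)*R' + 2) := by
      intro n
      have h1 : (1:ℝ) ≤ (2:ℝ)^((n:ℝ)*R') := by
        rw [show (1:ℝ) = (2:ℝ)^(0:ℝ) from (Real.rpow_zero 2).symm]
        exact Real.rpow_le_rpow_of_exponent_le one_le_two (by positivity)
      have hmono : (2:ℝ)^((n:ℝ)*R) ≤ (2:ℝ)^((n:ℝ)*R') :=
        Real.rpow_le_rpow_of_exponent_le one_le_two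
          (mul_le_mul_of_nonneg_left (le_max_left R 0) (Nat.cast_nonneg n))
      have hceil : (⌈(2:ℝ)^((n:ℝ)*R)⌉₊ : ℝ) < (2:ℝ)^((n:ℝ)*R) + 1 :=
        Nat.ceil_lt_add_one (by positivity)
      have h4 : (2:ℝ)^((n:ℝ)*R'+2) = (2:ℝ)^((n:ℝ)*R') * 4 := by
        rw [Real.rpow_add two_pos]
        congr 1
        rw [show (2:ℝ) = ((2:ℕ):ℝ) by norm_num, Real.rpow_natCast]
        norm_num
      have h5 : (Msz n : ℝ) = max 1 (⌈(2:ℝ)^((n:ℝ)*R)⌉₊ : ℝ) := by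
        rw [hMsz]
        push_cast
        rfl
      rw [h5, h4]
      apply max_le
      · linarith
      · linarith
    have hkb : ∀ n : ℕ, ((n:ℝ) - 2)/2 ≤ ((kOf n : ℕ) : ℝ) := by
      intro n
      have h1 : n ≤ 2 * kOf n + 2 := by unfold kOf; omega
      have h2 : (n:ℝ) ≤ 2*((kOf n : ℕ) : ℝ) + 2 := by exact_mod_cast h1
      linarith
    have hev : ∀ᶠ n : ℕ in Filter.atTop, (3:ℝ) ≤ (n:ℝ) * (1/2 - R') := by
      have hpos : (0:ℝ) < 1/2 - R' := by linarith
      have ht : Filter.Tendsto (fun n : ℕ => (n:ℝ) * (1/2 - R')) Filter.atTop Filter.atTop :=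
        Filter.Tendsto.atTop_mul_const hpos tendsto_natCast_atTop_atTop
      exact ht.eventually_ge_atTop 3
    have hkey : ∀ n : ℕ, (3:ℝ) ≤ (n:ℝ)*(1/2 - R') → Msz n ≤ 2^(kOf n) := by
      intro n h3
      have hle : (n:ℝ)*R' + 2 ≤ ((n:ℝ)-2)/2 := by linarith
      have hc1 : (2:ℝ)^((n:ℝ)*R'+2) ≤ (2:ℝ)^(((n:ℝ)-2)/2) :=
        Real.rpow_le_rpow_of_exponent_le one_le_two hle
      have hc2 : (2:ℝ)^(((n:ℝ)-2)/2) ≤ (2:ℝ)^(((kOf n : ℕ)):ℝ) :=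
        Real.rpow_le_rpow_of_exponent_le one_le_two (hkb n)
      have hfin : (Msz n : ℝ) ≤ ((2^(kOf n) : ℕ) : ℝ) := by
        push_cast
        calc (Msz n:ℝ) ≤ _ := hMb n
          _ ≤ _ := le_trans hc1 hc2
          _ = (2:ℝ)^(kOf n : ℕ) := Real.rpow_natCast 2 (kOf n)
      exact_mod_cast hfin
    have hg : Filter.Tendsto (fun n : ℕ => (8:ℝ) * ((2:ℝ)^(R' - 1/2))^n)
        Filter.atTop (nhds 0) := by
      have hr0 : (0:ℝ) ≤ (2:ℝ)^(R'-1/2) := le_of_lt (Real.rpow_pos_of_pos two_pos _)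
      have hr1 : (2:ℝ)^(R'-1/2) < 1 :=
        Real.rpow_lt_one_of_one_lt_of_neg one_lt_two (by linarith)
      have := (tendsto_pow_atTop_nhds_zero_of_lt_one hr0 hr1).const_mul (8:ℝ)
      simpa using this
    have hd01 : d = 0 ∨ d = 1 := by omega
    rcases hd01 with rfl | rfl
    · have hzero : ∀ᶠ n : ℕ in Filter.atTop,
          errProb bscW (bern (1/2)) (myCode n (Msz n) (hMpos n)) 0 = 0 :=
        hev.mono (fun n hn => err0 (hMpos n) (hkey n hn))
      exact Filter.Tendsto.congr' (hzero.mono fun n hn => hn.symm) tendsto_const_nhds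
    · apply squeeze_zero' (hev.mono fun n _ => errProb_nonneg _ _) ?_ hg
      refine hev.mono (fun n hn => ?_)
      refine le_trans (err1 (hMpos n) (hkey n hn)) ?_
      have hden : (2:ℝ)^(((n:ℝ)-2)/2) ≤ (2:ℝ)^(kOf n : ℕ) := by
        rw [← Real.rpow_natCast 2 (kOf n)]
        exact Real.rpow_le_rpow_of_exponent_le one_le_two (hkb n)
      have hdenpos : (0:ℝ) < (2:ℝ)^(((n:ℝ)-2)/2) := Real.rpow_pos_of_pos two_pos _
      have hd2 : (Msz n : ℝ)/2^(kOf n) ≤ (2:ℝ)^((n:ℝ)*R'+2) / (2:ℝ)^(((n:ℝ)-2)/2) :=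
        div_le_div₀ (by positivity) (hMb n) hdenpos hden
      refine le_trans hd2 (le_of_eq ?_)
      rw [← Real.rpow_sub two_pos, ← Real.rpow_natCast ((2:ℝ)^(R'-1/2)) n,
        ← Real.rpow_mul (le_of_lt two_pos)]
      have h8 : (8:ℝ) = (2:ℝ)^(3:ℝ) := by
        rw [show (3:ℝ) = ((3:ℕ):ℝ) by norm_num, Real.rpow_natCast]
        norm_num
      rw [h8, ← Real.rpow_add two_pos]
      congr 1
      ring

/-- The capacity of the binary symmetric AGP channel with crossover probability `1/2`
and delay set `𝒟 = {0,1}` equals `1/2` bit per channel use. -/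
theorem bsagp_half_capacity :
    sSup {R : ℝ | Achievable bscW (bern (1 / 2)) 0 1 R} = 1 / 2 := by
  have hub : ∀ x ∈ {R : ℝ | Achievable bscW (bern (1 / 2)) 0 1 R}, x ≤ 1/2 :=
    fun x hx => achievable_le_half hx
  have hbdd : BddAbove {R : ℝ | Achievable bscW (bern (1 / 2)) 0 1 R} := ⟨1/2, hub⟩
  apply le_antisymm
  · exact csSup_le ⟨0, achievable_of_lt_half (by norm_num)⟩ hub
  · by_contra h
    push_neg at h
    set S := {R : ℝ | Achievable bscW (bern (1 / 2)) 0 1 R}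
    have hmem : (sSup S + 1/2)/2 ∈ S := achievable_of_lt_half (by
      show (sSup S + 1/2)/2 < 1/2
      linarith)
    have hle : (sSup S + 1/2)/2 ≤ sSup S := le_csSup hbdd hmem
    linarith


end BSAGP9
end

section
/- Fix d ≥ 1 and n ≥ 1, and let S_{1−d}, S_{2−d}, …, S_n be i.i.d. Bool-valued random variables with P(S_j = true) = 1/2. Define K_i = S_i ⊕ S_{i−d} for i = 1,…,n. Then K_1, …, K_n are mutually independent and each K_i satisfies P(K_i = true) = 1/2; i.e., the sequence (K_1,…,K_n) is i.i.d. Bernoulli(1/2). -/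
open MeasureTheory ProbabilityTheory
open scoped ENNReal

/-- `K_i = S_{i+d} ⊕ S_i` (0-indexed; corresponding to `K_i = S_i ⊕ S_{i−d}` for the
1-indexed family `S_{1−d},…,S_n`). -/
def Kseq {Ω : Type*} (d n : ℕ) (S : Fin (n + d) → Ω → Bool) (i : Fin n) (ω : Ω) : Bool :=
  xor (S ⟨(i : ℕ) + d, by have := i.isLt; omega⟩ ω) (S ⟨(i : ℕ), by have := i.isLt; omega⟩ ω)

section auxCount

/-- The set of Boolean vectors satisfying the XOR constraints indexed by `T`. -/
def sat' (d n : ℕ) (T : Finset (Fin n)) : Finset (Fin (n + d) → Bool) :=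
  Finset.univ.filter (fun x => ∀ i ∈ T,
    xor (x ⟨(i : ℕ) + d, by have := i.isLt; omega⟩) (x ⟨(i : ℕ), by have := i.isLt; omega⟩) = true)

lemma mem_sat' {d n : ℕ} {T : Finset (Fin n)} {x : Fin (n+d) → Bool} :
    x ∈ sat' d n T ↔ ∀ i ∈ T,
    xor (x ⟨(i : ℕ) + d, by have := i.isLt; omega⟩) (x ⟨(i : ℕ), by have := i.isLt; omega⟩)
      = true := by
  simp [sat']

lemma sat'_card (d n : ℕ) (hd : 1 ≤ d) (T : Finset (Fin n)) :
    (sat' d n T).card * 2 ^ T.card = 2 ^ (n + d) := by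
  induction T using Finset.strongInduction with
  | _ T ih =>
    rcases T.eq_empty_or_nonempty with rfl | hT
    · simp [sat', Finset.card_univ]
    · set m := T.max' hT with hm
      have hmT : m ∈ T := T.max'_mem hT
      set j0 : Fin (n + d) := ⟨(m : ℕ) + d, by have := m.isLt; omega⟩ with hj0
      set fl : (Fin (n+d) → Bool) → (Fin (n+d) → Bool) :=
        fun x => Function.update x j0 (! x j0) with hfl
      have flval : ∀ x j, fl x j = if j = j0 then ! x j0 else x j := by
        intro x j
        by_cases hj : j = j0
        · subst hj; simp [fl]
        · simp [fl, Function.update_of_ne hj, hj]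
      have hflip : Function.Involutive fl := by
        intro x
        funext j
        rcases eq_or_ne j j0 with rfl | hj
        · simp [flval]
        · simp [flval, hj]
      have hne1 : ∀ i ∈ T.erase m, (⟨(i : ℕ) + d, by have := i.isLt; omega⟩ : Fin (n+d)) ≠ j0 := by
        intro i hi
        have h1 : i ≠ m := Finset.ne_of_mem_erase hi
        have h2 : i ≤ m := T.le_max' i (Finset.mem_of_mem_erase hi)
        have : (i : ℕ) < (m : ℕ) := lt_of_le_of_ne h2 (fun h => h1 (Fin.ext h))
        simp only [hj0, Fin.ne_iff_vne]
        omega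
      have hne2 : ∀ i : Fin n, i ∈ T → (⟨(i : ℕ), by have := i.isLt; omega⟩ : Fin (n+d)) ≠ j0 := by
        intro i hi
        have h2 : (i : ℕ) ≤ (m : ℕ) := T.le_max' i hi
        simp only [hj0, Fin.ne_iff_vne]
        omega
      have hfl_erase : ∀ x, (fl x ∈ sat' d n (T.erase m)) ↔ x ∈ sat' d n (T.erase m) := by
        intro x
        simp only [mem_sat']
        apply forall₂_congr
        intro i hi
        rw [flval, flval, if_neg (hne1 i hi), if_neg (hne2 i (Finset.mem_of_mem_erase hi))]
      have hfl_m : ∀ x, xor (fl x j0) (fl x ⟨(m:ℕ), by have := m.isLt; omega⟩)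
          = ! xor (x j0) (x ⟨(m:ℕ), by have := m.isLt; omega⟩) := by
        intro x
        rw [flval, flval, if_pos rfl, if_neg (hne2 m hmT)]
        cases x j0 <;> cases x ⟨(m:ℕ), _⟩ <;> rfl
      have hsplit : ∀ x, x ∈ sat' d n T ↔ (x ∈ sat' d n (T.erase m) ∧
          xor (x j0) (x ⟨(m:ℕ), by have := m.isLt; omega⟩) = true) := by
        intro x
        simp only [mem_sat']
        constructor
        · intro h
          exact ⟨fun i hi => h i (Finset.mem_of_mem_erase hi), h m hmT⟩
        · rintro ⟨h1, h2⟩ i hi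
          rcases eq_or_ne i m with rfl | hne
          · exact h2
          · exact h1 i (Finset.mem_erase.mpr ⟨hne, hi⟩)
      have key : sat' d n (T.erase m) = sat' d n T ∪ (sat' d n T).image fl := by
        ext x
        simp only [Finset.mem_union, Finset.mem_image]
        constructor
        · intro hx
          by_cases hc : xor (x j0) (x ⟨(m:ℕ), by have := m.isLt; omega⟩) = true
          · exact Or.inl ((hsplit x).mpr ⟨hx, hc⟩)
          · refine Or.inr ⟨fl x, ?_, hflip x⟩
            refine (hsplit _).mpr ⟨(hfl_erase x).mpr hx, ?_⟩
            rw [hfl_m]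
            simpa using hc
        · intro h
          rcases h with hx | hx
          · exact ((hsplit x).mp hx).1
          · obtain ⟨y, hy, rfl⟩ := hx
            exact (hfl_erase y).mpr ((hsplit y).mp hy).1
      have hdisj : Disjoint (sat' d n T) ((sat' d n T).image fl) := by
        rw [Finset.disjoint_left]
        intro x hx hx2
        obtain ⟨y, hy, rfl⟩ := Finset.mem_image.mp hx2
        have h1 := ((hsplit _).mp hx).2
        have h2 := ((hsplit y).mp hy).2
        rw [hfl_m, h2] at h1
        simp at h1
      have hcard : (sat' d n (T.erase m)).card = 2 * (sat' d n T).card := by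
        rw [key, Finset.card_union_of_disjoint hdisj,
          Finset.card_image_of_injective _ hflip.injective]
        ring
      have hih := ih (T.erase m) (Finset.erase_ssubset hmT)
      rw [hcard] at hih
      have hc : T.card = (T.erase m).card + 1 := by
        rw [Finset.card_erase_of_mem hmT]
        have : 1 ≤ T.card := Finset.card_pos.mpr hT
        omega
      rw [hc, pow_succ]
      nlinarith [hih]

end auxCount

lemma bool_top_eq :
    (inferInstance : MeasurableSpace Bool) = MeasurableSpace.generateFrom {{true}} := by
  apply le_antisymm
  · intro s _
    have hsing : ∀ b : Bool,
        MeasurableSet[MeasurableSpace.generateFrom {({true} : Set Bool)}] {b} := by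
      intro b
      cases b
      · have : ({false} : Set Bool) = ({true} : Set Bool)ᶜ := by
          ext b; cases b <;> simp
        rw [this]
        exact (MeasurableSpace.measurableSet_generateFrom (Set.mem_singleton _)).compl
      · exact MeasurableSpace.measurableSet_generateFrom (Set.mem_singleton _)
    have : s = ⋃ b ∈ s, {b} := by simp
    rw [this]
    exact MeasurableSet.biUnion (Set.to_countable s) (fun b _ => hsing b)
  · intro s hs
    exact trivial

section auxMeas

variable {Ω : Type*} [MeasurableSpace Ω] (μ : Measure Ω) [IsProbabilityMeasure μ]
  {d n : ℕ} (S : Fin (n + d) → Ω → Bool)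

lemma atom_meas (hmeas : ∀ j, Measurable (S j))
    (hind : iIndepFun S μ)
    (hp : ∀ j, μ {ω | S j ω = true} = 1 / 2) (x : Fin (n + d) → Bool) :
    μ (⋂ j, S j ⁻¹' {x j}) = (1 / 2 : ℝ≥0∞) ^ (n + d) := by
  have h1 : ∀ (j : Fin (n+d)) (b : Bool), μ (S j ⁻¹' {b}) = 1 / 2 := by
    intro j b
    have ht : μ (S j ⁻¹' {true}) = 1 / 2 := by
      have : S j ⁻¹' {true} = {ω | S j ω = true} := by ext ω; simp
      rw [this]; exact hp j
    cases b
    · have hc : S j ⁻¹' {false} = (S j ⁻¹' {true})ᶜ := by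
        ext ω; simp
      rw [hc, measure_compl ((hmeas j) (measurableSet_singleton _)) (measure_ne_top μ _), ht,
        measure_univ]
      simp [one_div, ENNReal.one_sub_inv_two]
    · exact ht
  rw [hind.meas_iInter (fun j => ⟨{x j}, trivial, rfl⟩)]
  simp_rw [h1]
  simp [Finset.prod_const, Finset.card_univ]

lemma biInter_eq (T : Finset (Fin n)) :
    (⋂ i ∈ T, {ω | Kseq d n S i ω = true}) = ⋃ x ∈ sat' d n T, ⋂ j, S j ⁻¹' {x j} := by
  ext ω
  simp only [Set.mem_iInter, Set.mem_iUnion, Set.mem_setOf_eq, Set.mem_preimage,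
    Set.mem_singleton_iff]
  constructor
  · intro h
    exact ⟨fun j => S j ω, mem_sat'.mpr (fun i hi => h i hi), fun j => rfl⟩
  · rintro ⟨x, hx, hω⟩ i hi
    have := mem_sat'.mp hx i hi
    simpa [Kseq, hω _] using this

lemma main_meas (hd : 1 ≤ d) (hmeas : ∀ j, Measurable (S j))
    (hind : iIndepFun S μ)
    (hp : ∀ j, μ {ω | S j ω = true} = 1 / 2) (T : Finset (Fin n)) :
    μ (⋂ i ∈ T, {ω | Kseq d n S i ω = true}) = (1 / 2 : ℝ≥0∞) ^ T.card := by
  rw [biInter_eq]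
  rw [measure_biUnion_finset ?hd (fun x _ => MeasurableSet.iInter
    (fun j => (hmeas j) (measurableSet_singleton _)))]
  case hd =>
    intro x hx y hy hxy
    have : ∃ j, x j ≠ y j := by
      by_contra h
      push_neg at h
      exact hxy (funext h)
    obtain ⟨j, hj⟩ := this
    simp only [Function.onFun]
    rw [Set.disjoint_left]
    intro ω h1 h2
    have e1 : S j ω = x j := by
      have := Set.mem_iInter.mp h1 j; simpa using this
    have e2 : S j ω = y j := by
      have := Set.mem_iInter.mp h2 j; simpa using this
    exact hj (e1 ▸ e2)
  have := atom_meas μ S hmeas hind hp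
  calc ∑ x ∈ sat' d n T, μ (⋂ j, S j ⁻¹' {x j})
      = ∑ x ∈ sat' d n T, (1 / 2 : ℝ≥0∞) ^ (n + d) := Finset.sum_congr rfl (fun x _ => this x)
    _ = ((sat' d n T).card : ℝ≥0∞) * (1 / 2) ^ (n + d) := by
        rw [Finset.sum_const, nsmul_eq_mul]
    _ = (1 / 2 : ℝ≥0∞) ^ T.card := by
        have hc := sat'_card d n hd T
        have h2 : ((sat' d n T).card : ℝ≥0∞) * (2 : ℝ≥0∞) ^ T.card = 2 ^ (n + d) := by
          exact_mod_cast congrArg (Nat.cast : ℕ → ℝ≥0∞) hc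
        have h2ne0 : ((2 : ℝ≥0∞) ^ T.card) ≠ 0 := by positivity
        have h2net : ((2 : ℝ≥0∞) ^ T.card) ≠ ⊤ := ENNReal.pow_ne_top (by norm_num)
        have hcval : ((sat' d n T).card : ℝ≥0∞) = 2 ^ (n + d) * ((2:ℝ≥0∞) ^ T.card)⁻¹ := by
          rw [← h2, mul_assoc, ENNReal.mul_inv_cancel h2ne0 h2net, mul_one]
        rw [hcval]
        simp only [one_div, ← ENNReal.inv_pow]
        rw [mul_comm ((2:ℝ≥0∞)^(n+d)) _, mul_assoc,
          ENNReal.mul_inv_cancel (a := (2:ℝ≥0∞)^(n+d)) (by positivity)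
          (ENNReal.pow_ne_top (by norm_num)), mul_one]

end auxMeas

/-- If `S_{1−d},…,S_n` are i.i.d. Bernoulli(1/2) and `K_i = S_i ⊕ S_{i−d}` for
`i = 1,…,n`, then `K_1,…,K_n` are i.i.d. Bernoulli(1/2). -/
theorem xor_lags_iid_bernoulli_half {Ω : Type*} [MeasurableSpace Ω]
    (μ : Measure Ω) [IsProbabilityMeasure μ]
    (d n : ℕ) (hd : 1 ≤ d) (hn : 1 ≤ n)
    (S : Fin (n + d) → Ω → Bool) (hmeas : ∀ j, Measurable (S j))
    (hind : iIndepFun S μ)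
    (hp : ∀ j, μ {ω | S j ω = true} = 1 / 2) :
    iIndepFun (Kseq d n S) μ ∧
      ∀ i : Fin n, μ {ω | Kseq d n S i ω = true} = 1 / 2 := by
  have main : ∀ T : Finset (Fin n),
      μ (⋂ i ∈ T, {ω | Kseq d n S i ω = true}) = (1 / 2 : ℝ≥0∞) ^ T.card :=
    main_meas μ S hd hmeas hind hp
  have Kmeas : ∀ i, Measurable (Kseq d n S i) := by
    intro i
    exact Measurable.comp (f := fun ω => (S ⟨(i:ℕ)+d, by have := i.isLt; omega⟩ ω,
        S ⟨(i:ℕ), by have := i.isLt; omega⟩ ω))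
      (measurable_of_countable (fun p : Bool × Bool => xor p.1 p.2))
      (Measurable.prodMk (hmeas _) (hmeas _))
  have hsingle : ∀ i : Fin n, μ {ω | Kseq d n S i ω = true} = 1 / 2 := by
    intro i
    have := main {i}
    simpa using this
  refine ⟨?_, hsingle⟩
  rw [iIndepFun_iff_iIndep]
  refine iIndepSets.iIndep (fun i => (Kmeas i).comap_le) (fun i => {{ω | Kseq d n S i ω = true}})
    (fun i => IsPiSystem.singleton _) (fun i => ?_) ?_
  · rw [show (Bool.instMeasurableSpace : MeasurableSpace Bool) =
      MeasurableSpace.generateFrom {{true}} from bool_top_eq, MeasurableSpace.comap_generateFrom]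
    congr 1
    rw [Set.image_singleton]
    rfl
  · rw [iIndepSets_iff]
    intro T f hf
    have hfeq : ∀ i ∈ T, f i = {ω | Kseq d n S i ω = true} := fun i hi => hf i hi
    calc μ (⋂ i ∈ T, f i) = μ (⋂ i ∈ T, {ω | Kseq d n S i ω = true}) := by
          congr 1
          exact Set.iInter₂_congr hfeq
      _ = (1 / 2 : ℝ≥0∞) ^ T.card := main T
      _ = ∏ i ∈ T, (1 / 2 : ℝ≥0∞) := by rw [Finset.prod_const]
      _ = ∏ i ∈ T, μ (f i) := Finset.prod_congr rfl (fun i hi => by rw [hfeq i hi, hsingle i])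
end

section
/- Let n ≥ 2 and let S₀, S₁, …, S_n be i.i.d. Bool-valued random variables with P(S_j = true) = p ∈ [0,1], and set K_i = S_i ⊕ S_{i−1} for i = 1,…,n. Then the joint entropy satisfies H[(K₁,…,K_n)] ≤ H[K₁] + (n−1)·H[K₂ | K₁], where H[K₂ | K₁] is the conditional entropy of K₂ given K₁. -/
open MeasureTheory ProbabilityTheory

/-- Shannon entropy `H[X]` (in nats) of a random variable with finitely many values. -/
noncomputable def ent {Ω α : Type*} [MeasurableSpace Ω] [Fintype α]
    (μ : MeasureTheory.Measure Ω) (X : Ω → α) : ℝ :=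
  ∑ a, Real.negMulLog ((μ (X ⁻¹' {a})).toReal)

/-- Mutual information `I[X : Y]` (in nats) of finitely-valued random variables. -/
noncomputable def mutualInfo {Ω α β : Type*} [MeasurableSpace Ω] [Fintype α] [Fintype β]
    (μ : MeasureTheory.Measure Ω) (X : Ω → α) (Y : Ω → β) : ℝ :=
  ent μ X + ent μ Y - ent μ (fun ω => (X ω, Y ω))

/-- Conditional entropy `H[X | Y]` (in nats) of finitely-valued random variables. -/
noncomputable def condEnt {Ω α β : Type*} [MeasurableSpace Ω] [Fintype α] [Fintype β]
    (μ : MeasureTheory.Measure Ω) (X : Ω → α) (Y : Ω → β) : ℝ :=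
  ent μ (fun ω => (X ω, Y ω)) - ent μ Y

/-- Conditional mutual information `I[X : Y | Z]` (in nats) of finitely-valued random
variables. -/
noncomputable def condMI {Ω α β γ : Type*} [MeasurableSpace Ω] [Fintype α] [Fintype β]
    [Fintype γ] (μ : MeasureTheory.Measure Ω) (X : Ω → α) (Y : Ω → β) (Z : Ω → γ) : ℝ :=
  ent μ (fun ω => (X ω, Z ω)) + ent μ (fun ω => (Y ω, Z ω)) -
    ent μ (fun ω => ((X ω, Y ω), Z ω)) - ent μ Z

/-- Gibbs' inequality. -/
lemma my_gibbs {ι : Type*} [Fintype ι] (p q : ι → ℝ)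
    (hp : ∀ i, 0 ≤ p i) (hq : ∀ i, 0 ≤ q i) (hpq : ∀ i, p i ≠ 0 → q i ≠ 0)
    (hq1 : ∑ i, q i ≤ 1) (hp1 : ∑ i, p i = 1) :
    ∑ i, p i * Real.log (q i) ≤ ∑ i, p i * Real.log (p i) := by
  have key : ∀ i, p i * Real.log (q i) - p i * Real.log (p i) ≤ q i - p i := by
    intro i
    rcases eq_or_lt_of_le (hp i) with h | h
    · simp only [← h, zero_mul, sub_zero, sub_self]
      exact hq i
    · have hqi : 0 < q i := lt_of_le_of_ne (hq i) (Ne.symm (hpq i (ne_of_gt h)))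
      have hlog : Real.log (q i / p i) ≤ q i / p i - 1 :=
        Real.log_le_sub_one_of_pos (by positivity)
      rw [Real.log_div hqi.ne' h.ne'] at hlog
      have h2 : p i * (Real.log (q i) - Real.log (p i)) ≤ p i * (q i / p i - 1) :=
        mul_le_mul_of_nonneg_left hlog (le_of_lt h)
      have h3 : p i * (q i / p i - 1) = q i - p i := by field_simp
      nlinarith
  have hsum := Finset.sum_le_sum (fun i (_ : i ∈ Finset.univ) => key i)
  rw [Finset.sum_sub_distrib, Finset.sum_sub_distrib] at hsum
  linarith

/-- entropy is invariant under injective recoding -/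
lemma ent_comp_inj {Ω α β : Type*} [MeasurableSpace Ω] [Fintype α] [Fintype β]
    [DecidableEq β] (μ : Measure Ω) (g : α → β) (hg : Function.Injective g) (X : Ω → α) :
    ent μ (fun ω => g (X ω)) = ent μ X := by
  unfold ent
  rw [← Finset.sum_subset (Finset.subset_univ (Finset.univ.image g))]
  · rw [Finset.sum_image (fun a _ b _ h => hg h)]
    refine Finset.sum_congr rfl fun a _ => ?_
    have hs : (fun ω => g (X ω)) ⁻¹' {g a} = X ⁻¹' {a} := by
      ext ω; simp [hg.eq_iff]
    rw [hs]
  · intro b _ hb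
    have hs : (fun ω => g (X ω)) ⁻¹' {b} = ∅ := by
      ext ω
      simp only [Set.mem_preimage, Set.mem_singleton_iff, Set.mem_empty_iff_false, iff_false]
      intro h
      exact hb (Finset.mem_image.2 ⟨X ω, Finset.mem_univ _, h⟩)
    simp [hs, Real.negMulLog]

lemma ent_congr_dist {Ω α : Type*} [MeasurableSpace Ω] [Fintype α]
    (μ : Measure Ω) (X X' : Ω → α) (h : ∀ a, μ (X ⁻¹' {a}) = μ (X' ⁻¹' {a})) :
    ent μ X = ent μ X' :=
  Finset.sum_congr rfl fun a _ => by rw [h a]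

lemma meas_fiber_sum {Ω β : Type*} [MeasurableSpace Ω] [Fintype β] (μ : Measure Ω) (Y : Ω → β)
    (hY : ∀ b, MeasurableSet (Y ⁻¹' {b})) {B : Set Ω} (hB : MeasurableSet B) :
    μ B = ∑ b, μ (Y ⁻¹' {b} ∩ B) := by
  have hB' : (⋃ b ∈ (Finset.univ : Finset β), Y ⁻¹' {b} ∩ B) = B := by
    ext ω
    simp only [Set.mem_iUnion, Finset.mem_univ, Set.mem_inter_iff, Set.mem_preimage,
      Set.mem_singleton_iff, true_and, exists_prop]
    exact ⟨fun ⟨b, _, h⟩ => h, fun h => ⟨Y ω, rfl, h⟩⟩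
  calc μ B = μ (⋃ b ∈ (Finset.univ : Finset β), Y ⁻¹' {b} ∩ B) := by rw [hB']
    _ = ∑ b, μ (Y ⁻¹' {b} ∩ B) := by
        refine measure_biUnion_finset ?_ (fun b _ => (hY b).inter hB)
        intro b _ b' _ hbb'
        refine Set.disjoint_left.2 fun ω hω hω' => hbb' ?_
        have h1 : Y ω = b := hω.1
        have h2 : Y ω = b' := hω'.1
        rw [← h1, h2]

lemma submod {Ω α β γ : Type*} [MeasurableSpace Ω] [Fintype α] [Fintype β] [Fintype γ]
    (μ : Measure Ω) [IsProbabilityMeasure μ] (W : Ω → α) (Y : Ω → β) (X : Ω → γ)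
    (hW : ∀ a, MeasurableSet (W ⁻¹' {a})) (hY : ∀ b, MeasurableSet (Y ⁻¹' {b}))
    (hX : ∀ c, MeasurableSet (X ⁻¹' {c})) :
    ent μ (fun ω => ((W ω, Y ω), X ω)) + ent μ X ≤
      ent μ (fun ω => (W ω, X ω)) + ent μ (fun ω => (Y ω, X ω)) := by
  classical
  set r : α → β → γ → ℝ := fun a b c => (μ (W ⁻¹' {a} ∩ Y ⁻¹' {b} ∩ X ⁻¹' {c})).toReal with hr_def
  set u : α → γ → ℝ := fun a c => ∑ b, r a b c with hu_def
  set v : β → γ → ℝ := fun b c => ∑ a, r a b c with hv_def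
  set s : γ → ℝ := fun c => ∑ a, u a c with hs_def
  have hr0 : ∀ a b c, 0 ≤ r a b c := fun a b c => ENNReal.toReal_nonneg
  have hu0 : ∀ a c, 0 ≤ u a c := fun a c => Finset.sum_nonneg fun b _ => hr0 a b c
  have hv0 : ∀ b c, 0 ≤ v b c := fun b c => Finset.sum_nonneg fun a _ => hr0 a b c
  have hs0 : ∀ c, 0 ≤ s c := fun c => Finset.sum_nonneg fun a _ => hu0 a c
  have swap3 : ∀ f : α → β → γ → ℝ,
      (∑ a, ∑ b, ∑ c, f a b c) = ∑ c, ∑ a, ∑ b, f a b c := by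
    intro f
    rw [show (∑ a, ∑ b, ∑ c, f a b c) = ∑ a, ∑ c, ∑ b, f a b c from
      Finset.sum_congr rfl fun a _ => Finset.sum_comm]
    exact Finset.sum_comm
  -- measure identities
  have hWXset : ∀ (a : α) (c : γ),
      (fun ω => (W ω, X ω)) ⁻¹' {(a, c)} = W ⁻¹' {a} ∩ X ⁻¹' {c} := by
    intro a c; ext ω; simp [Prod.ext_iff]
  have hYXset : ∀ (b : β) (c : γ),
      (fun ω => (Y ω, X ω)) ⁻¹' {(b, c)} = Y ⁻¹' {b} ∩ X ⁻¹' {c} := by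
    intro b c; ext ω; simp [Prod.ext_iff]
  have hWYXset : ∀ (a : α) (b : β) (c : γ),
      (fun ω => ((W ω, Y ω), X ω)) ⁻¹' {((a, b), c)} = W ⁻¹' {a} ∩ Y ⁻¹' {b} ∩ X ⁻¹' {c} := by
    intro a b c; ext ω; simp [Prod.ext_iff, and_assoc]
  have hu1 : ∀ (a : α) (c : γ),
      ((μ ((fun ω => (W ω, X ω)) ⁻¹' {(a, c)})).toReal) = u a c := by
    intro a c
    rw [hWXset, meas_fiber_sum μ Y hY ((hW a).inter (hX c)),
      ENNReal.toReal_sum (fun b _ => measure_ne_top μ _)]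
    refine Finset.sum_congr rfl fun b _ => ?_
    congr 2
    ext ω
    simp only [Set.mem_inter_iff, Set.mem_preimage]
    tauto
  have hv1 : ∀ (b : β) (c : γ),
      ((μ ((fun ω => (Y ω, X ω)) ⁻¹' {(b, c)})).toReal) = v b c := by
    intro b c
    rw [hYXset, meas_fiber_sum μ W hW ((hY b).inter (hX c)),
      ENNReal.toReal_sum (fun a _ => measure_ne_top μ _)]
    refine Finset.sum_congr rfl fun a _ => ?_
    congr 2
    ext ω
    simp only [Set.mem_inter_iff, Set.mem_preimage]
    tauto
  have hs1 : ∀ c : γ, ((μ (X ⁻¹' {c})).toReal) = s c := by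
    intro c
    rw [meas_fiber_sum μ W hW (hX c),
      ENNReal.toReal_sum (fun a _ => measure_ne_top μ _)]
    refine Finset.sum_congr rfl fun a _ => ?_
    rw [← hu1 a c, hWXset]
  have htot : ∑ c, s c = 1 := by
    have h1 : μ Set.univ = ∑ c, μ (X ⁻¹' {c} ∩ Set.univ) :=
      meas_fiber_sum μ X hX MeasurableSet.univ
    simp only [Set.inter_univ, measure_univ] at h1
    have h2 := congrArg ENNReal.toReal h1
    rw [ENNReal.toReal_sum (fun c _ => measure_ne_top μ _)] at h2
    simp only [ENNReal.toReal_one] at h2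
    calc ∑ c, s c = ∑ c, (μ (X ⁻¹' {c})).toReal :=
          Finset.sum_congr rfl fun c _ => (hs1 c).symm
      _ = 1 := h2.symm
  -- rewrite entropies
  have eWX : ent μ (fun ω => (W ω, X ω)) = ∑ a, ∑ c, Real.negMulLog (u a c) := by
    rw [ent, Fintype.sum_prod_type]
    exact Finset.sum_congr rfl fun a _ => Finset.sum_congr rfl fun c _ => by rw [hu1 a c]
  have eYX : ent μ (fun ω => (Y ω, X ω)) = ∑ b, ∑ c, Real.negMulLog (v b c) := by
    rw [ent, Fintype.sum_prod_type]
    exact Finset.sum_congr rfl fun b _ => Finset.sum_congr rfl fun c _ => by rw [hv1 b c]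
  have eX : ent μ X = ∑ c, Real.negMulLog (s c) := by
    rw [ent]
    exact Finset.sum_congr rfl fun c _ => by rw [hs1 c]
  have eWYX : ent μ (fun ω => ((W ω, Y ω), X ω)) =
      ∑ a, ∑ b, ∑ c, Real.negMulLog (r a b c) := by
    rw [ent, Fintype.sum_prod_type, Fintype.sum_prod_type]
    refine Finset.sum_congr rfl fun a _ => Finset.sum_congr rfl fun b _ =>
      Finset.sum_congr rfl fun c _ => ?_
    rw [hWYXset]
  rw [eWX, eYX, eX, eWYX]
  -- now pure algebra
  have hrle_u : ∀ a b c, r a b c ≤ u a c := fun a b c =>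
    Finset.single_le_sum (fun b' _ => hr0 a b' c) (Finset.mem_univ b)
  have hrle_v : ∀ a b c, r a b c ≤ v b c := fun a b c =>
    Finset.single_le_sum (fun a' _ => hr0 a' b c) (Finset.mem_univ a)
  have hule_s : ∀ a c, u a c ≤ s c := fun a c =>
    Finset.single_le_sum (fun a' _ => hu0 a' c) (Finset.mem_univ a)
  have hvs : ∀ c, ∑ b, v b c = s c := fun c => Finset.sum_comm
  set P : α × β × γ → ℝ := fun i => r i.1 i.2.1 i.2.2 with hP_def
  set Q : α × β × γ → ℝ := fun i => u i.1 i.2.2 * v i.2.1 i.2.2 / s i.2.2 with hQ_def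
  have hsum3 : ∀ g : α × β × γ → ℝ, (∑ i, g i) = ∑ a, ∑ b, ∑ c, g (a, b, c) := by
    intro g
    rw [Fintype.sum_prod_type]
    exact Finset.sum_congr rfl fun a _ => Fintype.sum_prod_type _
  have hp1 : ∑ i, P i = 1 := by
    rw [hsum3, swap3, ← htot]
  have hq1 : ∑ i, Q i ≤ 1 := by
    rw [hsum3, swap3]
    calc ∑ c, ∑ a, ∑ b, Q (a, b, c)
        = ∑ c, s c * s c / s c := by
          refine Finset.sum_congr rfl fun c _ => ?_
          show (∑ a, ∑ b, u a c * v b c / s c) = s c * s c / s c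
          simp only [← Finset.sum_div]
          rw [← Finset.sum_mul_sum, hvs c]
      _ ≤ ∑ c, s c := by
          refine Finset.sum_le_sum fun c _ => ?_
          rcases eq_or_lt_of_le (hs0 c) with h | h
          · rw [← h]; simp
          · rw [mul_div_assoc, div_self h.ne', mul_one]
      _ = 1 := htot
  have hpq : ∀ i, P i ≠ 0 → Q i ≠ 0 := by
    rintro ⟨a, b, c⟩ hP
    have hrpos : 0 < r a b c := lt_of_le_of_ne (hr0 a b c) (Ne.symm hP)
    have hupos : 0 < u a c := lt_of_lt_of_le hrpos (hrle_u a b c)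
    have hvpos : 0 < v b c := lt_of_lt_of_le hrpos (hrle_v a b c)
    have hspos : 0 < s c := lt_of_lt_of_le hupos (hule_s a c)
    exact ne_of_gt (div_pos (mul_pos hupos hvpos) hspos)
  have key := my_gibbs P Q (fun i => hr0 _ _ _)
    (fun i => div_nonneg (mul_nonneg (hu0 _ _) (hv0 _ _)) (hs0 _)) hpq hq1 hp1
  have hsplit : ∑ i, P i * Real.log (Q i) =
      ∑ a, ∑ b, ∑ c, (r a b c * Real.log (u a c) + r a b c * Real.log (v b c)
        - r a b c * Real.log (s c)) := by
    rw [hsum3]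
    refine Finset.sum_congr rfl fun a _ => Finset.sum_congr rfl fun b _ =>
      Finset.sum_congr rfl fun c _ => ?_
    show r a b c * Real.log (u a c * v b c / s c) = _
    by_cases hr : r a b c = 0
    · simp [hr]
    · have hrpos : 0 < r a b c := lt_of_le_of_ne (hr0 a b c) (Ne.symm hr)
      have hupos : 0 < u a c := lt_of_lt_of_le hrpos (hrle_u a b c)
      have hvpos : 0 < v b c := lt_of_lt_of_le hrpos (hrle_v a b c)
      have hspos : 0 < s c := lt_of_lt_of_le hupos (hule_s a c)
      rw [Real.log_div (mul_ne_zero hupos.ne' hvpos.ne') hspos.ne',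
        Real.log_mul hupos.ne' hvpos.ne']
      ring
  have hPP : ∑ i, P i * Real.log (P i) = ∑ a, ∑ b, ∑ c, r a b c * Real.log (r a b c) := by
    rw [hsum3]
  have IA : ∑ a, ∑ b, ∑ c, r a b c * Real.log (u a c)
      = ∑ a, ∑ c, u a c * Real.log (u a c) := by
    refine Finset.sum_congr rfl fun a _ => ?_
    rw [show (∑ b, ∑ c, r a b c * Real.log (u a c))
        = ∑ c, ∑ b, r a b c * Real.log (u a c) from Finset.sum_comm]
    exact Finset.sum_congr rfl fun c _ => (Finset.sum_mul _ _ _).symm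
  have IB : ∑ a, ∑ b, ∑ c, r a b c * Real.log (v b c)
      = ∑ b, ∑ c, v b c * Real.log (v b c) := by
    rw [show (∑ a, ∑ b, ∑ c, r a b c * Real.log (v b c))
        = ∑ b, ∑ a, ∑ c, r a b c * Real.log (v b c) from Finset.sum_comm]
    refine Finset.sum_congr rfl fun b _ => ?_
    rw [show (∑ a, ∑ c, r a b c * Real.log (v b c))
        = ∑ c, ∑ a, r a b c * Real.log (v b c) from Finset.sum_comm]
    exact Finset.sum_congr rfl fun c _ => (Finset.sum_mul _ _ _).symm
  have IC : ∑ a, ∑ b, ∑ c, r a b c * Real.log (s c)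
      = ∑ c, s c * Real.log (s c) := by
    rw [swap3]
    refine Finset.sum_congr rfl fun c _ => ?_
    calc ∑ a, ∑ b, r a b c * Real.log (s c)
        = ∑ a, u a c * Real.log (s c) :=
          Finset.sum_congr rfl fun a _ => (Finset.sum_mul _ _ _).symm
      _ = s c * Real.log (s c) := (Finset.sum_mul _ _ _).symm
  rw [hsplit] at key
  simp only [Finset.sum_add_distrib, Finset.sum_sub_distrib] at key
  rw [IA, IB, IC, hPP] at key
  simp only [Real.negMulLog, neg_mul, Finset.sum_neg_distrib]
  linarith


lemma snoc_inj {m : ℕ} {w w' : Fin m → Bool} {x x' : Bool}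
    (h : (Fin.snoc w x : Fin (m+1) → Bool) = Fin.snoc w' x') : w = w' ∧ x = x' := by
  constructor
  · funext j
    have := congrFun h j.castSucc
    simpa using this
  · have := congrFun h (Fin.last m)
    simpa using this

/-- For `n ≥ 2` and `S₀, …, S_n` i.i.d. Bernoulli(`p`), the increments
`K_i = S_i ⊕ S_{i−1}` satisfy `H[(K₁,…,K_n)] ≤ H[K₁] + (n−1)·H[K₂ | K₁]`. -/
theorem joint_entropy_of_increments_le {Ω : Type*} [MeasurableSpace Ω]
    (μ : Measure Ω) [IsProbabilityMeasure μ]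
    (n : ℕ) (hn : 2 ≤ n)
    (S : Fin (n + 1) → Ω → Bool) (hmeas : ∀ j, Measurable (S j))
    (hind : iIndepFun S μ)
    (p : ℝ) (hp0 : 0 ≤ p) (hp1 : p ≤ 1)
    (hiid : ∀ j, μ {ω | S j ω = true} = ENNReal.ofReal p) :
    ent μ (fun ω => fun i : Fin n => xor (S i.succ ω) (S i.castSucc ω)) ≤
      ent μ (fun ω => xor (S (⟨0, by omega⟩ : Fin n).succ ω) (S (⟨0, by omega⟩ : Fin n).castSucc ω)) +
        ((n : ℝ) - 1) *
          condEnt μ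
            (fun ω => xor (S (⟨1, by omega⟩ : Fin n).succ ω) (S (⟨1, by omega⟩ : Fin n).castSucc ω))
            (fun ω => xor (S (⟨0, by omega⟩ : Fin n).succ ω) (S (⟨0, by omega⟩ : Fin n).castSucc ω)) := by
  classical
  set f : Bool → ENNReal := fun s => if s then ENNReal.ofReal p else 1 - ENNReal.ofReal p with hf_def
  have hS_single : ∀ (j : Fin (n+1)) (s : Bool), μ (S j ⁻¹' {s}) = f s := by
    intro j s
    have htrue : S j ⁻¹' {true} = {ω | S j ω = true} := rfl
    cases s
    · have h1 : S j ⁻¹' {false} = (S j ⁻¹' {true})ᶜ := by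
        ext ω; simp
      rw [h1, prob_compl_eq_one_sub ((hmeas j) (measurableSet_singleton true)),
        htrue, hiid j]
      simp [hf_def]
    · rw [htrue, hiid j]; simp [hf_def]
  -- product formulas for 2 and 3 distinct indices
  have hpair : ∀ (j0 j1 : Fin (n+1)), j0 < j1 → ∀ s0 s1 : Bool,
      μ (S j0 ⁻¹' {s0} ∩ S j1 ⁻¹' {s1}) = f s0 * f s1 := by
    intro j0 j1 h01 s0 s1
    have hne01 : j0 ≠ j1 := ne_of_lt h01
    set sets : Fin (n+1) → Set Bool := fun j =>
      if j = j0 then {s0} else if j = j1 then {s1} else Set.univ with hsets_def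
    have key := hind.measure_inter_preimage_eq_mul ({j0, j1} : Finset _)
      (sets := sets) (fun i _ => MeasurableSet.of_discrete)
    have hmem1 : j0 ∉ ({j1} : Finset _) := by simp [hne01]
    rw [Finset.set_biInter_insert, Finset.set_biInter_singleton,
      Finset.prod_insert hmem1, Finset.prod_singleton] at key
    have e0 : sets j0 = {s0} := if_pos rfl
    have e1 : sets j1 = {s1} := by
      simp [hsets_def, Ne.symm hne01]
    rw [e0, e1] at key
    rw [key, hS_single, hS_single]
  have htriple : ∀ (j0 j1 j2 : Fin (n+1)), j0 < j1 → j1 < j2 → ∀ s0 s1 s2 : Bool,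
      μ (S j0 ⁻¹' {s0} ∩ S j1 ⁻¹' {s1} ∩ S j2 ⁻¹' {s2}) = f s0 * f s1 * f s2 := by
    intro j0 j1 j2 h01 h12 s0 s1 s2
    have hne01 : j0 ≠ j1 := ne_of_lt h01
    have hne12 : j1 ≠ j2 := ne_of_lt h12
    have hne02 : j0 ≠ j2 := ne_of_lt (h01.trans h12)
    set sets : Fin (n+1) → Set Bool := fun j =>
      if j = j0 then {s0} else if j = j1 then {s1} else if j = j2 then {s2} else Set.univ
      with hsets_def
    have key := hind.measure_inter_preimage_eq_mul ({j0, j1, j2} : Finset _)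
      (sets := sets) (fun i _ => MeasurableSet.of_discrete)
    have hmem1 : j0 ∉ ({j1, j2} : Finset _) := by simp [hne01, hne02]
    have hmem2 : j1 ∉ ({j2} : Finset _) := by simp [hne12]
    rw [Finset.set_biInter_insert, Finset.set_biInter_insert, Finset.set_biInter_singleton,
      Finset.prod_insert hmem1, Finset.prod_insert hmem2, Finset.prod_singleton] at key
    have e0 : sets j0 = {s0} := if_pos rfl
    have e1 : sets j1 = {s1} := by
      simp [hsets_def, Ne.symm hne01]
    have e2 : sets j2 = {s2} := by
      simp [hsets_def, Ne.symm hne02, Ne.symm hne12]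
    rw [e0, e1, e2] at key
    rw [Set.inter_assoc, key, hS_single, hS_single, hS_single, mul_assoc]
  -- the increment process over ℕ
  set S' : ℕ → Ω → Bool := fun j ω => if h : j < n + 1 then S ⟨j, h⟩ ω else false with hS'_def
  have hS'eq : ∀ (j : ℕ) (h : j < n + 1), S' j = S ⟨j, h⟩ := by
    intro j h; funext ω; simp only [hS'_def, dif_pos h]
  have hS'm : ∀ j, Measurable (S' j) := by
    intro j
    by_cases h : j < n + 1
    · rw [hS'eq j h]; exact hmeas _
    · have : S' j = fun _ => false := funext fun ω => dif_neg h
      rw [this]; exact measurable_const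
  set K : ℕ → Ω → Bool := fun i ω => xor (S' (i+1) ω) (S' i ω) with hK_def
  have hKm : ∀ i, Measurable (K i) := by
    intro i
    have h1 : Measurable fun ω => (S' (i+1) ω, S' i ω) := (hS'm _).prodMk (hS'm _)
    exact (measurable_of_countable (fun x : Bool × Bool => xor x.1 x.2)).comp h1
  have hKset : ∀ (i : ℕ) (a : Bool), MeasurableSet (K i ⁻¹' {a}) :=
    fun i a => hKm i (measurableSet_singleton a)
  set T : (m : ℕ) → Ω → (Fin m → Bool) := fun m ω i => K i ω with hT_def
  have hTset : ∀ (m : ℕ) (v : Fin m → Bool), MeasurableSet (T m ⁻¹' {v}) := by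
    intro m v
    have : T m ⁻¹' {v} = ⋂ i : Fin m, K i ⁻¹' {v i} := by
      ext ω
      simp only [Set.mem_preimage, Set.mem_singleton_iff, Set.mem_iInter, funext_iff]
      exact Iff.rfl
    rw [this]
    exact MeasurableSet.iInter fun i => hKset _ _
  -- distribution of single increments
  have hKsingle : ∀ i, i + 1 ≤ n → ∀ a : Bool,
      μ (K i ⁻¹' {a}) = ∑ s : Bool, f (xor s a) * f s := by
    intro i hi a
    have hset : K i ⁻¹' {a} = ⋃ s ∈ (Finset.univ : Finset Bool),
        (S' i ⁻¹' {xor s a} ∩ S' (i+1) ⁻¹' {s}) := by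
      ext ω
      simp only [Set.mem_preimage, Set.mem_singleton_iff, Set.mem_iUnion, Finset.mem_univ,
        true_and, Set.mem_inter_iff, exists_prop]
      have hb : ∀ x y a : Bool, (xor y x = a) ↔ (∃ s : Bool, x = xor s a ∧ y = s) := by decide
      exact hb (S' i ω) (S' (i+1) ω) a
    rw [hset, measure_biUnion_finset ?disj (fun s _ => ((hS'm i (measurableSet_singleton _)).inter
      (hS'm (i+1) (measurableSet_singleton _))))]
    case disj =>
      intro s _ s' _ hss'
      refine Set.disjoint_left.2 fun ω hω hω' => hss' ?_
      exact (Set.mem_singleton_iff.1 hω.2).symm.trans (Set.mem_singleton_iff.1 hω'.2)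
    refine Finset.sum_congr rfl fun s _ => ?_
    rw [hS'eq i (by omega), hS'eq (i+1) (by omega)]
    exact hpair ⟨i, by omega⟩ ⟨i+1, by omega⟩ (by simp [Fin.lt_def]) _ _
  -- distribution of consecutive pairs
  have hKpair : ∀ i, i + 2 ≤ n → ∀ a b : Bool,
      μ ((fun ω => (K (i+1) ω, K i ω)) ⁻¹' {(b, a)}) =
        ∑ s : Bool, f (xor s a) * f s * f (xor b s) := by
    intro i hi a b
    have hset : (fun ω => (K (i+1) ω, K i ω)) ⁻¹' {(b, a)} = ⋃ s ∈ (Finset.univ : Finset Bool),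
        (S' i ⁻¹' {xor s a} ∩ S' (i+1) ⁻¹' {s} ∩ S' (i+2) ⁻¹' {xor b s}) := by
      ext ω
      simp only [Set.mem_preimage, Set.mem_singleton_iff, Set.mem_iUnion, Finset.mem_univ,
        true_and, Set.mem_inter_iff, exists_prop, Prod.mk.injEq]
      have hb : ∀ x y z a b : Bool, (xor z y = b ∧ xor y x = a) ↔
          (∃ s : Bool, (x = xor s a ∧ y = s) ∧ z = xor b s) := by decide
      exact hb (S' i ω) (S' (i+1) ω) (S' (i+2) ω) a b
    rw [hset, measure_biUnion_finset ?disj (fun s _ =>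
      (((hS'm i (measurableSet_singleton _)).inter
        (hS'm (i+1) (measurableSet_singleton _))).inter
        (hS'm (i+2) (measurableSet_singleton _))))]
    case disj =>
      intro s _ s' _ hss'
      refine Set.disjoint_left.2 fun ω hω hω' => hss' ?_
      exact (Set.mem_singleton_iff.1 hω.1.2).symm.trans (Set.mem_singleton_iff.1 hω'.1.2)
    refine Finset.sum_congr rfl fun s _ => ?_
    rw [hS'eq i (by omega), hS'eq (i+1) (by omega), hS'eq (i+2) (by omega)]
    exact htriple ⟨i, by omega⟩ ⟨i+1, by omega⟩ ⟨i+2, by omega⟩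
      (by simp [Fin.lt_def]) (by simp [Fin.lt_def]) _ _ _
  -- identical distribution consequences
  have hentK : ∀ i, i + 1 ≤ n → ent μ (K i) = ent μ (K 0) := by
    intro i hi
    exact ent_congr_dist μ _ _ fun a => by
      rw [hKsingle i hi a, hKsingle 0 (by omega) a]
  have hcond : ∀ i, i + 2 ≤ n → condEnt μ (K (i+1)) (K i) = condEnt μ (K 1) (K 0) := by
    intro i hi
    unfold condEnt
    have h1 : ent μ (fun ω => (K (i+1) ω, K i ω)) = ent μ (fun ω => (K 1 ω, K 0 ω)) := by
      refine ent_congr_dist μ _ _ fun x => ?_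
      obtain ⟨b, a⟩ := x
      rw [hKpair i hi a b, hKpair 0 (by omega) a b]
    rw [h1, hentK i (by omega)]
  -- induction
  have main : ∀ k, k + 1 ≤ n →
      ent μ (T (k+1)) ≤ ent μ (K 0) + (k : ℝ) * condEnt μ (K 1) (K 0) := by
    intro k
    induction k with
    | zero =>
      intro _
      have h1 : T 1 = fun ω => (fun b => fun _ : Fin 1 => b) (K 0 ω) := by
        funext ω i
        simp only [hT_def]
        congr 1
        have := i.isLt
        omega
      have hg : Function.Injective (fun b : Bool => (fun _ : Fin 1 => b)) := by
        intro b b' h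
        exact congrFun h ⟨0, Nat.one_pos⟩
      rw [h1, ent_comp_inj μ (fun b : Bool => (fun _ : Fin 1 => b)) hg (K 0)]
      simp
    | succ k ih =>
      intro hk1
      have ih' := ih (by omega)
      have hsub := submod μ (T k) (K (k+1)) (K k) (hTset k) (hKset (k+1)) (hKset k)
      have e1 : ent μ (T (k+1)) = ent μ (fun ω => (T k ω, K k ω)) := by
        have hfe : T (k+1) = fun ω =>
            (fun wx : (Fin k → Bool) × Bool => (Fin.snoc wx.1 wx.2 : Fin (k+1) → Bool))
              ((fun ω' => (T k ω', K k ω')) ω) := by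
          funext ω
          refine funext fun i => ?_
          refine Fin.lastCases ?_ (fun j => ?_) i
          · simp [hT_def]
          · simp [hT_def]
        rw [hfe]
        have hginj : Function.Injective
            (fun wx : (Fin k → Bool) × Bool => (Fin.snoc wx.1 wx.2 : Fin (k+1) → Bool)) := by
          rintro ⟨w, x⟩ ⟨w', x'⟩ h
          obtain ⟨h1, h2⟩ := snoc_inj h
          simp_all
        exact ent_comp_inj μ
          (fun wx : (Fin k → Bool) × Bool => (Fin.snoc wx.1 wx.2 : Fin (k+1) → Bool))
          hginj (fun ω => (T k ω, K k ω))
      have e2 : ent μ (T (k+2)) = ent μ (fun ω => ((T k ω, K (k+1) ω), K k ω)) := by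
        have hfe : T (k+2) = fun ω =>
            (fun wyx : ((Fin k → Bool) × Bool) × Bool =>
              (Fin.snoc (Fin.snoc wyx.1.1 wyx.2 : Fin (k+1) → Bool) wyx.1.2 : Fin (k+2) → Bool))
              ((fun ω' => ((T k ω', K (k+1) ω'), K k ω')) ω) := by
          funext ω
          refine funext fun i => ?_
          refine Fin.lastCases ?_ (fun j => ?_) i
          · simp [hT_def]
          · refine Fin.lastCases ?_ (fun j' => ?_) j
            · simp [hT_def]
            · simp [hT_def]
        rw [hfe]
        have hginj : Function.Injective
            (fun wyx : ((Fin k → Bool) × Bool) × Bool =>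
              (Fin.snoc (Fin.snoc wyx.1.1 wyx.2 : Fin (k+1) → Bool) wyx.1.2 :
                Fin (k+2) → Bool)) := by
          rintro ⟨⟨w, y⟩, x⟩ ⟨⟨w', y'⟩, x'⟩ h
          obtain ⟨h1, h2⟩ := snoc_inj h
          obtain ⟨h3, h4⟩ := snoc_inj h1
          simp_all
        exact ent_comp_inj μ
          (fun wyx : ((Fin k → Bool) × Bool) × Bool =>
            (Fin.snoc (Fin.snoc wyx.1.1 wyx.2 : Fin (k+1) → Bool) wyx.1.2 : Fin (k+2) → Bool))
          hginj (fun ω => ((T k ω, K (k+1) ω), K k ω))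
      have hc : condEnt μ (K (k+1)) (K k) = condEnt μ (K 1) (K 0) := hcond k hk1
      have hstep : ent μ (T (k+2)) ≤ ent μ (T (k+1)) + condEnt μ (K 1) (K 0) := by
        rw [e1, e2, ← hc]
        unfold condEnt
        linarith
      calc ent μ (T (k+2)) ≤ ent μ (T (k+1)) + condEnt μ (K 1) (K 0) := hstep
        _ ≤ ent μ (K 0) + (k : ℝ) * condEnt μ (K 1) (K 0) + condEnt μ (K 1) (K 0) := by
            linarith
        _ = ent μ (K 0) + ((k + 1 : ℕ) : ℝ) * condEnt μ (K 1) (K 0) := by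
            push_cast; ring
  -- conclude
  have hfinal := main (n - 1) (by omega)
  have hn1 : n - 1 + 1 = n := by omega
  rw [hn1] at hfinal
  have hgoalT : (fun ω => fun i : Fin n => xor (S i.succ ω) (S i.castSucc ω)) = T n := by
    funext ω i
    simp only [hT_def, hK_def]
    rw [hS'eq (↑i + 1) (by have := i.isLt; omega), hS'eq ↑i (by have := i.isLt; omega)]
    rfl
  have hgoal0 : (fun ω => xor (S (⟨0, by omega⟩ : Fin n).succ ω)
      (S (⟨0, by omega⟩ : Fin n).castSucc ω)) = K 0 := by
    funext ω
    simp only [hK_def]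
    rw [hS'eq 1 (by omega), hS'eq 0 (by omega)]
    rfl
  have hgoal1 : (fun ω => xor (S (⟨1, by omega⟩ : Fin n).succ ω)
      (S (⟨1, by omega⟩ : Fin n).castSucc ω)) = K 1 := by
    funext ω
    simp only [hK_def]
    rw [hS'eq 2 (by omega), hS'eq 1 (by omega)]
    rfl
  rw [hgoalT, hgoal0, hgoal1]
  have hcast : ((n - 1 : ℕ) : ℝ) = (n : ℝ) - 1 := by
    have : (1 : ℕ) ≤ n := by omega
    push_cast [Nat.cast_sub this]
    ring
  rw [← hcast]
  exact hfinal
end
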